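/- Normalization for IKC: in the possible-world model over the frame given by OPEs Γ ≤ Γ' and the IKC modal accessibility relation Δ ◁ Γ, with valuation V_Γ = neutrals Γ ⊢ⁿᵉ ι, there is a function quote : (∀ Δ, ⟦Γ⟧_Δ → ⟦A⟧_Δ) → (Γ ⊢ⁿᶠ A) such that the composite norm = quote ∘ ⟦−⟧ : (Γ ⊢ A) → (Γ ⊢ⁿᶠ A) is complete (t ≈ u implies norm t = norm u) and adequate (norm t = norm u implies t ≈ u). -/

import Mathlib

namespace IKC

/-- Types of the Fitch-style calculus: base type ι, functions, box. -/
inductive Ty : Type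
  | base : Ty
  | arr : Ty → Ty → Ty
  | box : Ty → Ty

/-- Typing contexts: empty, extension by a type, extension by a lock 🔒. -/
inductive Cx : Type
  | nil : Cx
  | snoc : Cx → Ty → Cx
  | lock : Cx → Cx

/-- IKC modal accessibility relation Δ ◁ Γ: Γ = Δ,🔒,Δ' with Δ' lock-free. -/
inductive Ext : Cx → Cx → Type
  | nil : Ext Γ (.lock Γ)
  | var : Ext Δ Γ → Ext Δ (.snoc Γ A)

/-- Order-preserving embeddings Γ ≤ Γ'. -/
inductive Ope : Cx → Cx → Type
  | base : Ope .nil .nil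
  | drop : Ope Γ Γ' → Ope Γ (.snoc Γ' A)
  | keep : Ope Γ Γ' → Ope (.snoc Γ A) (.snoc Γ' A)
  | keepLock : Ope Γ Γ' → Ope (.lock Γ) (.lock Γ')

/-- Identity OPE. -/
def idOpe : (Γ : Cx) → Ope Γ Γ
  | .nil => .base
  | .snoc Γ _ => .keep (idOpe Γ)
  | .lock Γ => .keepLock (idOpe Γ)

/-- De Bruijn variables (no rule through locks). -/
inductive Var : Cx → Ty → Type
  | zero : Var (.snoc Γ A) A
  | succ : Var Γ A → Var (.snoc Γ B) A

/-- Intrinsically-typed terms of IKC. -/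
inductive Tm : Cx → Ty → Type
  | var : Var Γ A → Tm Γ A
  | lam : Tm (.snoc Γ A) B → Tm Γ (.arr A B)
  | app : Tm Γ (.arr A B) → Tm Γ A → Tm Γ B
  | box : Tm (.lock Γ) A → Tm Γ (.box A)
  | unbox : Tm Δ (.box A) → Ext Δ Γ → Tm Γ A

/-- Factorization of e : Δ ◁ Γ along an OPE o : Γ ≤ Γ'. -/
def factor : {Δ Γ Γ' : Cx} → Ext Δ Γ → Ope Γ Γ' → (Δ' : Cx) × Ope Δ Δ' × Ext Δ' Γ'
  | _, _, _, e, .drop o =>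
    let f := factor e o
    ⟨f.1, f.2.1, .var f.2.2⟩
  | _, _, _, .nil, .keepLock o => ⟨_, o, .nil⟩
  | _, _, _, .var e, .keep o =>
    let f := factor e o
    ⟨f.1, f.2.1, .var f.2.2⟩

/-- An accessibility proof e : Δ ◁ Γ yields an OPE Δ,🔒 ≤ Γ. -/
def factorOpe : {Δ Γ : Cx} → Ext Δ Γ → Ope (.lock Δ) Γ
  | _, _, .nil => idOpe _
  | _, _, .var e => .drop (factorOpe e)

/-- Weakening of variables along an OPE. -/
def wkVar : {Γ Γ' : Cx} → Ope Γ Γ' → Var Γ A → Var Γ' A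
  | _, _, .drop o, v => .succ (wkVar o v)
  | _, _, .keep _, .zero => .zero
  | _, _, .keep o, .succ v => .succ (wkVar o v)

/-- Weakening (renaming) of terms along an OPE. -/
def wkTm : {Γ Γ' : Cx} → Ope Γ Γ' → Tm Γ A → Tm Γ' A
  | _, _, o, .var v => .var (wkVar o v)
  | _, _, o, .lam t => .lam (wkTm (.keep o) t)
  | _, _, o, .app t u => .app (wkTm o t) (wkTm o u)
  | _, _, o, .box t => .box (wkTm (.keepLock o) t)
  | _, _, o, .unbox t e => .unbox (wkTm (factor e o).2.1 t) (factor e o).2.2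

/-- Substitutions Γ ⊢ˢ s : Δ. -/
inductive Sub : Cx → Cx → Type
  | empty : Sub Γ .nil
  | snoc : Sub Γ Δ → Tm Γ A → Sub Γ (.snoc Δ A)
  | lock : Sub Θ Δ → Ext Θ Γ → Sub Γ (.lock Δ)

/-- Weakening of substitutions along an OPE. -/
def wkSub : {Γ Γ' Δ : Cx} → Ope Γ Γ' → Sub Γ Δ → Sub Γ' Δ
  | _, _, _, _, .empty => .empty
  | _, _, _, o, .snoc s t => .snoc (wkSub o s) (wkTm o t)
  | _, _, _, o, .lock s e => .lock (wkSub (factor e o).2.1 s) (factor e o).2.2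

/-- Identity substitution. -/
def idSub : (Γ : Cx) → Sub Γ Γ
  | .nil => .empty
  | .snoc Γ _ => .snoc (wkSub (.drop (idOpe Γ)) (idSub Γ)) (.var .zero)
  | .lock Γ => .lock (idSub Γ) .nil

/-- Action of a substitution on a variable. -/
def substVar : {Γ Δ : Cx} → Sub Γ Δ → Var Δ A → Tm Γ A
  | _, _, .snoc _ t, .zero => t
  | _, _, .snoc s _, .succ v => substVar s v

/-- Trimming a substitution along the modal accessibility relation. -/
def trimSub : {Γ Δ Θ : Cx} → Sub Γ Δ → Ext Θ Δ → (Θ' : Cx) × Sub Θ' Θ × Ext Θ' Γ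
  | _, _, _, .lock s e, .nil => ⟨_, s, e⟩
  | _, _, _, .snoc s _, .var e => trimSub s e

/-- Application of a substitution to a term. -/
def subst : {Γ Δ : Cx} → Sub Γ Δ → Tm Δ A → Tm Γ A
  | _, _, s, .var v => substVar s v
  | _, _, s, .lam t => .lam (subst (.snoc (wkSub (.drop (idOpe _)) s) (.var .zero)) t)
  | _, _, s, .app t u => .app (subst s t) (subst s u)
  | _, _, s, .box t => .box (subst (.lock s .nil) t)
  | _, _, s, .unbox t e => .unbox (subst (trimSub s e).2.1 t) (trimSub s e).2.2

/-- The equational theory ≈ of IKC. -/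
inductive Conv : {Γ : Cx} → {A : Ty} → Tm Γ A → Tm Γ A → Prop
  | refl (t : Tm Γ A) : Conv t t
  | symm : Conv t u → Conv u t
  | trans : Conv t u → Conv u v → Conv t v
  | congLam : Conv t t' → Conv (.lam t) (.lam t')
  | congApp : Conv t t' → Conv u u' → Conv (.app t u) (.app t' u')
  | congBox : Conv t t' → Conv (.box t) (.box t')
  | congUnbox {t t' : Tm Δ (.box A)} {e : Ext Δ Γ} :
      Conv t t' → Conv (.unbox t e) (.unbox t' e)
  | betaFun (t : Tm (.snoc Γ A) B) (u : Tm Γ A) :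
      Conv (.app (.lam t) u) (subst (.snoc (idSub Γ) u) t)
  | etaFun (t : Tm Γ (.arr A B)) :
      Conv t (.lam (.app (wkTm (.drop (idOpe Γ)) t) (.var .zero)))
  | betaBox (t : Tm (.lock Δ) A) (e : Ext Δ Γ) :
      Conv (.unbox (.box t) e) (wkTm (factorOpe e) t)
  | etaBox (t : Tm Γ (.box A)) :
      Conv t (.box (.unbox t .nil))

end IKC

namespace IKC

mutual
/-- Normal forms of IKC. -/
inductive Nf : Cx → Ty → Type
  | up : Ne Γ .base → Nf Γ .base
  | lam : Nf (.snoc Γ A) B → Nf Γ (.arr A B)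
  | box : Nf (.lock Γ) A → Nf Γ (.box A)
/-- Neutral elements of IKC. -/
inductive Ne : Cx → Ty → Type
  | var : Var Γ A → Ne Γ A
  | app : Ne Γ (.arr A B) → Nf Γ A → Ne Γ B
  | unbox : Ne Δ (.box A) → Ext Δ Γ → Ne Γ A
end

/-- Composition of OPEs. -/
def compOpe : {Γ Γ' Γ'' : Cx} → Ope Γ Γ' → Ope Γ' Γ'' → Ope Γ Γ''
  | _, _, _, o, .drop p => .drop (compOpe o p)
  | _, _, _, .drop o, .keep p => .drop (compOpe o p)
  | _, _, _, .keep o, .keep p => .keep (compOpe o p)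
  | _, _, _, .keepLock o, .keepLock p => .keepLock (compOpe o p)
  | _, _, _, .base, .base => .base

mutual
/-- Weakening of normal forms along an OPE. -/
def wkNf : {Γ Γ' : Cx} → {A : Ty} → Ope Γ Γ' → Nf Γ A → Nf Γ' A
  | _, _, _, o, .up n => .up (wkNe o n)
  | _, _, _, o, .lam n => .lam (wkNf (.keep o) n)
  | _, _, _, o, .box n => .box (wkNf (.keepLock o) n)
/-- Weakening of neutral elements along an OPE. -/
def wkNe : {Γ Γ' : Cx} → {A : Ty} → Ope Γ Γ' → Ne Γ A → Ne Γ' A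
  | _, _, _, o, .var v => .var (wkVar o v)
  | _, _, _, o, .app n m => .app (wkNe o n) (wkNf o m)
  | _, _, _, o, .unbox n e => .unbox (wkNe (factor e o).2.1 n) (factor e o).2.2
end

/-- Interpretation of types in the NbE model (worlds are contexts, ≤ is given
by OPEs, R by the modal accessibility relation ◁, and the valuation of the
base type by neutral elements). -/
def SemTy : Ty → Cx → Type
  | .base, Γ => Ne Γ .base
  | .arr A B, Γ => ∀ Γ', Ope Γ Γ' → SemTy A Γ' → SemTy B Γ'
  | .box A, Γ => ∀ Γ', Ope Γ Γ' → ∀ Δ, Ext Γ' Δ → SemTy A Δ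

/-- Interpretation of contexts in the NbE model. -/
def SemCx : Cx → Cx → Type
  | .nil, _ => PUnit
  | .snoc Γ A, Δ => SemCx Γ Δ × SemTy A Δ
  | .lock Γ, Δ => (Θ : Cx) × SemCx Γ Θ × Ext Θ Δ

/-- Monotonicity for the NbE interpretation of types. -/
def wkSemTy : (A : Ty) → {Δ Δ' : Cx} → Ope Δ Δ' → SemTy A Δ → SemTy A Δ'
  | .base, _, _, o, n => wkNe o n
  | .arr _ _, _, _, o, f => fun Γ'' o' a => f Γ'' (compOpe o o') a
  | .box _, _, _, o, b => fun Γ'' o' Θ e => b Γ'' (compOpe o o') Θ e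

/-- Monotonicity for the NbE interpretation of contexts. -/
def wkSemCx : (Γ : Cx) → {Δ Δ' : Cx} → Ope Δ Δ' → SemCx Γ Δ → SemCx Γ Δ'
  | .nil, _, _, _, _ => PUnit.unit
  | .snoc Γ A, _, _, o, γ => (wkSemCx Γ o γ.1, wkSemTy A o γ.2)
  | .lock Γ, _, _, o, γ => ⟨(factor γ.2.2 o).1, wkSemCx Γ (factor γ.2.2 o).2.1 γ.2.1, (factor γ.2.2 o).2.2⟩

/-- Looking up a variable in an NbE environment. -/
def lookup : {Γ : Cx} → {A : Ty} → Var Γ A → ∀ {Δ}, SemCx Γ Δ → SemTy A Δ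
  | _, _, .zero, _, γ => γ.2
  | _, _, .succ v, _, γ => lookup v γ.1

/-- Trimming an NbE environment along the modal accessibility relation. -/
def trimSem : {Θ Γ : Cx} → Ext Θ Γ → ∀ {Δ}, SemCx Γ Δ → SemCx (.lock Θ) Δ
  | _, _, .nil, _, γ => γ
  | _, _, .var e, _, γ => trimSem e γ.1

/-- Evaluation of IKC terms in the NbE model. -/
def eval : {Γ : Cx} → {A : Ty} → Tm Γ A → ∀ Δ, SemCx Γ Δ → SemTy A Δ
  | _, _, .var v, _, γ => lookup v γ
  | _, _, .lam t, _, γ => fun Γ' o a => eval t Γ' (wkSemCx _ o γ, a)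
  | _, _, .app t u, Δ, γ => eval t Δ γ Δ (idOpe Δ) (eval u Δ γ)
  | _, _, .box t, _, γ => fun Γ' o Θ e => eval t Θ ⟨Γ', wkSemCx _ o γ, e⟩
  | _, _, .unbox t e, Δ, γ =>
    let d := trimSem e γ
    eval t d.1 d.2.1 d.1 (idOpe d.1) Δ d.2.2

/-! ### OPE algebra -/

theorem compOpe_id_right : ∀ {Γ Γ' : Cx} (o : Ope Γ Γ'), compOpe o (idOpe Γ') = o
  | _, _, .base => rfl
  | _, _, .drop o => by simp only [idOpe, compOpe, compOpe_id_right o]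
  | _, _, .keep o => by simp only [idOpe, compOpe, compOpe_id_right o]
  | _, _, .keepLock o => by simp only [idOpe, compOpe, compOpe_id_right o]

theorem compOpe_id_left : ∀ {Γ Γ' : Cx} (o : Ope Γ Γ'), compOpe (idOpe Γ) o = o
  | _, _, .base => rfl
  | _, _, .drop o => by simp only [idOpe, compOpe, compOpe_id_left o]
  | _, _, .keep o => by simp only [idOpe, compOpe, compOpe_id_left o]
  | _, _, .keepLock o => by simp only [idOpe, compOpe, compOpe_id_left o]

theorem compOpe_assoc : ∀ {Γ₀ Γ₁ Γ₂ Γ₃ : Cx} (o : Ope Γ₀ Γ₁) (p : Ope Γ₁ Γ₂) (q : Ope Γ₂ Γ₃),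
    compOpe (compOpe o p) q = compOpe o (compOpe p q)
  | _, _, _, _, o, p, .drop q => by simp only [compOpe, compOpe_assoc o p q]
  | _, _, _, _, o, .drop p, .keep q => by simp only [compOpe, compOpe_assoc o p q]
  | _, _, _, _, .drop o, .keep p, .keep q => by simp only [compOpe, compOpe_assoc o p q]
  | _, _, _, _, .keep o, .keep p, .keep q => by simp only [compOpe, compOpe_assoc o p q]
  | _, _, _, _, .keepLock o, .keepLock p, .keepLock q => by
      simp only [compOpe, compOpe_assoc o p q]
  | _, _, _, _, .base, .base, .base => rfl

theorem factor_drop (e : Ext Δ Γ) (o : Ope Γ Γ') :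
    factor e (.drop (A := A) o) = ⟨(factor e o).1, (factor e o).2.1, .var (factor e o).2.2⟩ := by
  simp only [factor]

theorem factor_keep (e : Ext Δ Γ) (o : Ope Γ Γ') :
    factor (.var (A := A) e) (.keep o)
      = ⟨(factor e o).1, (factor e o).2.1, .var (factor e o).2.2⟩ := by
  simp only [factor]

theorem factor_lock (o : Ope Γ Γ') :
    factor (.nil (Γ := Γ)) (.keepLock o) = ⟨Γ', o, .nil⟩ := by
  simp only [factor]

theorem factor_id : ∀ {Δ Γ : Cx} (e : Ext Δ Γ), factor e (idOpe Γ) = ⟨Δ, idOpe Δ, e⟩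
  | _, _, .nil => rfl
  | _, _, .var e => by simp only [idOpe, factor]; rw [factor_id e]

theorem factor_comp : ∀ {Δ Γ Γ' Γ'' : Cx} (e : Ext Δ Γ) (o : Ope Γ Γ') (p : Ope Γ' Γ''),
    factor e (compOpe o p) =
      ⟨(factor (factor e o).2.2 p).1,
        compOpe (factor e o).2.1 (factor (factor e o).2.2 p).2.1,
        (factor (factor e o).2.2 p).2.2⟩
  | _, _, _, _, e, o, .drop p => by
      rw [factor_drop (factor e o).2.2 p]
      simp only [compOpe]
      rw [factor_drop e (compOpe o p), factor_comp e o p]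
  | _, _, _, _, e, .drop o, .keep p => by
      rw [factor_drop e o]
      simp only [compOpe]
      rw [factor_keep (factor e o).2.2 p]
      rw [factor_drop e (compOpe o p), factor_comp e o p]
  | _, _, _, _, .var e, .keep o, .keep p => by
      rw [factor_keep e o]
      simp only [compOpe]
      rw [factor_keep (factor e o).2.2 p]
      rw [factor_keep e (compOpe o p), factor_comp e o p]
  | _, _, _, _, .nil, .keepLock o, .keepLock p => by
      rw [factor_lock o]
      simp only [compOpe]
      rw [factor_lock p, factor_lock (compOpe o p)]
  | _, _, _, _, e, o, .base => by cases o; cases e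

theorem factor_nil_factorOpe : ∀ {Δ Γ : Cx} (e : Ext Δ Γ),
    factor .nil (factorOpe e) = ⟨Δ, idOpe Δ, e⟩
  | _, _, .nil => factor_id .nil
  | _, _, .var e => by
      simp only [factorOpe]
      rw [factor_drop, factor_nil_factorOpe e]

/-- Composing a factorOpe with an OPE. -/
theorem factorOpe_comp : ∀ {Δ Γ Γ' : Cx} (e : Ext Δ Γ) (o : Ope Γ Γ'),
    compOpe (factorOpe e) o = compOpe (.keepLock (factor e o).2.1) (factorOpe (factor e o).2.2)
  | _, _, _, e, .drop o => by
      rw [factor_drop e o]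
      simp only [compOpe, factorOpe, factorOpe_comp e o]
  | _, _, _, .var e, .keep o => by
      rw [factor_keep e o]
      simp only [factorOpe, compOpe, factorOpe_comp e o]
  | _, _, _, .nil, .keepLock o => by
      rw [factor_lock o]
      simp only [factorOpe, idOpe, compOpe, compOpe_id_left, compOpe_id_right]

/-! ### Weakening of variables and terms -/

theorem wkVar_id : ∀ {Γ : Cx} {A : Ty} (v : Var Γ A), wkVar (idOpe Γ) v = v
  | _, _, .zero => rfl
  | _, _, .succ v => by simp only [idOpe, wkVar, wkVar_id v]

theorem wkVar_comp : ∀ {Γ Γ' Γ'' : Cx} {A : Ty} (o : Ope Γ Γ') (p : Ope Γ' Γ'') (v : Var Γ A),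
    wkVar p (wkVar o v) = wkVar (compOpe o p) v
  | _, _, _, _, o, .drop p, v => by simp only [compOpe, wkVar, wkVar_comp o p v]
  | _, _, _, _, .drop o, .keep p, v => by simp only [compOpe, wkVar, wkVar_comp o p v]
  | _, _, _, _, .keep o, .keep p, .zero => rfl
  | _, _, _, _, .keep o, .keep p, .succ v => by simp only [compOpe, wkVar, wkVar_comp o p v]
  | _, _, _, _, .base, _, v => nomatch v
  | _, _, _, _, .keepLock _, _, v => nomatch v

theorem wkTm_id : ∀ {Γ : Cx} {A : Ty} (t : Tm Γ A), wkTm (idOpe Γ) t = t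
  | _, _, .var v => by simp only [wkTm, wkVar_id]
  | _, _, .lam t => by
      have ih := wkTm_id t
      simp only [idOpe] at ih
      simp only [wkTm, ih]
  | _, _, .app t u => by simp only [wkTm, wkTm_id t, wkTm_id u]
  | _, _, .box t => by
      have ih := wkTm_id t
      simp only [idOpe] at ih
      simp only [wkTm, ih]
  | _, _, .unbox t e => by
      simp only [wkTm]
      rw [factor_id e, wkTm_id t]

theorem wkTm_comp : ∀ {Γ Γ' Γ'' : Cx} {A : Ty} (o : Ope Γ Γ') (p : Ope Γ' Γ'') (t : Tm Γ A),
    wkTm p (wkTm o t) = wkTm (compOpe o p) t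
  | _, _, _, _, o, p, .var v => by simp only [wkTm, wkVar_comp]
  | _, _, _, _, o, p, .lam t => by
      have ih := wkTm_comp (.keep o) (.keep p) t
      simp only [compOpe] at ih
      simp only [wkTm, ih]
  | _, _, _, _, o, p, .app t u => by simp only [wkTm, wkTm_comp o p t, wkTm_comp o p u]
  | _, _, _, _, o, p, .box t => by
      have ih := wkTm_comp (.keepLock o) (.keepLock p) t
      simp only [compOpe] at ih
      simp only [wkTm, ih]
  | _, _, _, _, o, p, .unbox t e => by
      simp only [wkTm]
      rw [factor_comp e o p,
        wkTm_comp (factor e o).2.1 (factor (factor e o).2.2 p).2.1 t]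
/-! ### Substitution algebra -/

theorem trimSub_lock (s : Sub Θ Δ) (e : Ext Θ Γ) :
    trimSub (.lock s e) .nil = ⟨Θ, s, e⟩ := by
  simp only [trimSub]

theorem trimSub_var (s : Sub Γ Δ) (t : Tm Γ A) (e : Ext Θ Δ) :
    trimSub (.snoc s t) (.var e) = trimSub s e := by
  simp only [trimSub]

theorem wkSub_id : ∀ {Γ Δ : Cx} (s : Sub Γ Δ), wkSub (idOpe Γ) s = s
  | _, _, .empty => by simp only [wkSub]
  | _, _, .snoc s t => by simp only [wkSub, wkSub_id s, wkTm_id t]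
  | _, _, .lock s e => by
      simp only [wkSub]
      rw [factor_id e, wkSub_id s]

theorem wkSub_comp : ∀ {Γ Γ' Γ'' Δ : Cx} (o : Ope Γ Γ') (p : Ope Γ' Γ'') (s : Sub Γ Δ),
    wkSub p (wkSub o s) = wkSub (compOpe o p) s
  | _, _, _, _, o, p, .empty => by simp only [wkSub]
  | _, _, _, _, o, p, .snoc s t => by simp only [wkSub, wkSub_comp o p s, wkTm_comp o p t]
  | _, _, _, _, o, p, .lock s e => by
      simp only [wkSub]
      rw [factor_comp e o p,
        wkSub_comp (factor e o).2.1 (factor (factor e o).2.2 p).2.1 s]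

/-- Restriction of a substitution along an OPE of its codomain. -/
def restrictSub : {Δ Δ' Γ : Cx} → Ope Δ Δ' → Sub Γ Δ' → Sub Γ Δ
  | _, _, _, .base, s => s
  | _, _, _, .drop o, .snoc s _ => restrictSub o s
  | _, _, _, .keep o, .snoc s t => .snoc (restrictSub o s) t
  | _, _, _, .keepLock o, .lock s e => .lock (restrictSub o s) e

theorem restrictSub_id : ∀ {Δ Γ : Cx} (s : Sub Γ Δ), restrictSub (idOpe Δ) s = s
  | _, _, .empty => rfl
  | _, _, .snoc s t => by simp only [idOpe, restrictSub, restrictSub_id s]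
  | _, _, .lock s e => by simp only [idOpe, restrictSub, restrictSub_id s]

theorem restrictSub_wkSub : ∀ {Δ Δ' Γ Γ' : Cx} (p : Ope Δ Δ') (q : Ope Γ Γ') (s : Sub Γ Δ'),
    restrictSub p (wkSub q s) = wkSub q (restrictSub p s)
  | _, _, _, _, .base, q, .empty => by simp only [wkSub, restrictSub]
  | _, _, _, _, .drop p, q, .snoc s t => by
      simp only [wkSub, restrictSub, restrictSub_wkSub p q s]
  | _, _, _, _, .keep p, q, .snoc s t => by
      simp only [wkSub, restrictSub, restrictSub_wkSub p q s]
  | _, _, _, _, .keepLock p, q, .lock s e => by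
      simp only [wkSub, restrictSub, restrictSub_wkSub p _ s]

theorem substVar_wkSub : ∀ {Γ Γ' Δ : Cx} {A : Ty} (o : Ope Γ Γ') (s : Sub Γ Δ) (v : Var Δ A),
    substVar (wkSub o s) v = wkTm o (substVar s v)
  | _, _, _, _, o, .snoc s t, .zero => by simp only [wkSub, substVar]
  | _, _, _, _, o, .snoc s t, .succ v => by simp only [wkSub, substVar, substVar_wkSub o s v]

theorem substVar_restrictSub : ∀ {Δ Δ' Γ : Cx} {A : Ty} (o : Ope Δ Δ') (s : Sub Γ Δ')
    (v : Var Δ A), substVar (restrictSub o s) v = substVar s (wkVar o v)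
  | _, _, _, _, .drop o, .snoc s t, v => by
      simp only [restrictSub, wkVar, substVar, substVar_restrictSub o s v]
  | _, _, _, _, .keep o, .snoc s t, .zero => by simp only [restrictSub, wkVar, substVar]
  | _, _, _, _, .keep o, .snoc s t, .succ v => by
      simp only [restrictSub, wkVar, substVar, substVar_restrictSub o s v]

theorem trimSub_wkSub : ∀ {Γ Γ' Δ Θ : Cx} (o : Ope Γ Γ') (s : Sub Γ Δ) (e : Ext Θ Δ),
    trimSub (wkSub o s) e =
      ⟨(factor (trimSub s e).2.2 o).1,
        wkSub (factor (trimSub s e).2.2 o).2.1 (trimSub s e).2.1,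
        (factor (trimSub s e).2.2 o).2.2⟩
  | _, _, _, _, o, .lock s e₀, .nil => by
      rw [trimSub_lock s e₀]
      simp only [wkSub]
      rw [trimSub_lock]
  | _, _, _, _, o, .snoc s t, .var e => by
      rw [trimSub_var s t e]
      simp only [wkSub]
      rw [trimSub_var, trimSub_wkSub o s e]

theorem trimSub_restrictSub : ∀ {Δ Δ' Γ Θ : Cx} (o : Ope Δ Δ') (s : Sub Γ Δ') (e : Ext Θ Δ),
    trimSub (restrictSub o s) e =
      ⟨(trimSub s (factor e o).2.2).1,
        restrictSub (factor e o).2.1 (trimSub s (factor e o).2.2).2.1,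
        (trimSub s (factor e o).2.2).2.2⟩
  | _, _, _, _, .drop o, .snoc s t, e => by
      rw [factor_drop e o]
      simp only [restrictSub]
      rw [trimSub_var, trimSub_restrictSub o s e]
  | _, _, _, _, .keep o, .snoc s t, .var e => by
      rw [factor_keep e o]
      simp only [restrictSub]
      rw [trimSub_var, trimSub_var, trimSub_restrictSub o s e]
  | _, _, _, _, .keepLock o, .lock s e₀, .nil => by
      rw [factor_lock o]
      simp only [restrictSub]
      rw [trimSub_lock, trimSub_lock]

theorem wkTm_subst : ∀ {Γ Γ' Δ : Cx} {A : Ty} (o : Ope Γ Γ') (s : Sub Γ Δ) (t : Tm Δ A),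
    wkTm o (subst s t) = subst (wkSub o s) t
  | _, _, _, _, o, s, .var v => by simp only [subst, substVar_wkSub]
  | _, _, _, _, o, s, .lam t => by
      simp only [subst, wkTm]
      rw [wkTm_subst (.keep o) _ t]
      simp only [wkSub, wkTm, wkVar]
      rw [wkSub_comp, wkSub_comp]
      simp only [compOpe, compOpe_id_left, compOpe_id_right]
  | _, _, _, _, o, s, .app t u => by
      simp only [subst, wkTm, wkTm_subst o s t, wkTm_subst o s u]
  | _, _, _, _, o, s, .box t => by
      simp only [subst, wkTm]
      rw [wkTm_subst (.keepLock o) _ t]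
      simp only [wkSub]
      rw [factor_lock o]
  | _, _, _, _, o, s, .unbox t e => by
      simp only [subst, wkTm]
      rw [trimSub_wkSub o s e, wkTm_subst (factor (trimSub s e).2.2 o).2.1 _ t]

theorem subst_wkTm : ∀ {Δ Δ' Γ : Cx} {A : Ty} (o : Ope Δ Δ') (s : Sub Γ Δ') (t : Tm Δ A),
    subst s (wkTm o t) = subst (restrictSub o s) t
  | _, _, _, _, o, s, .var v => by simp only [subst, wkTm, substVar_restrictSub]
  | _, _, _, _, o, s, .lam t => by
      simp only [subst, wkTm]
      rw [subst_wkTm (.keep o) _ t]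
      simp only [restrictSub]
      rw [restrictSub_wkSub]
  | _, _, _, _, o, s, .app t u => by
      simp only [subst, wkTm, subst_wkTm o s t, subst_wkTm o s u]
  | _, _, _, _, o, s, .box t => by
      simp only [subst, wkTm]
      rw [subst_wkTm (.keepLock o) _ t]
      simp only [restrictSub]
  | _, _, _, _, o, s, .unbox t e => by
      simp only [subst, wkTm]
      rw [trimSub_restrictSub o s e, subst_wkTm (factor e o).2.1 _ t]

theorem restrictSub_idSub : ∀ {Γ Γ' : Cx} (o : Ope Γ Γ'),
    restrictSub o (idSub Γ') = wkSub o (idSub Γ)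
  | _, _, .base => rfl
  | _, _, .drop o => by
      simp only [idSub, restrictSub, wkSub]
      rw [restrictSub_wkSub, restrictSub_idSub o, wkSub_comp]
      simp only [compOpe, compOpe_id_left, compOpe_id_right]
  | _, _, .keep o => by
      simp only [idSub, restrictSub, wkSub, wkTm, wkVar]
      rw [restrictSub_wkSub, restrictSub_idSub o, wkSub_comp, wkSub_comp]
      simp only [compOpe, compOpe_id_left, compOpe_id_right]
  | _, _, .keepLock o => by
      simp only [idSub, restrictSub, wkSub]
      rw [factor_lock o, restrictSub_idSub o]

theorem substVar_idSub : ∀ {Γ : Cx} {A : Ty} (v : Var Γ A), substVar (idSub Γ) v = .var v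
  | _, _, .zero => by simp only [idSub, substVar]
  | _, _, .succ v => by
      simp only [idSub, substVar]
      rw [substVar_wkSub, substVar_idSub v]
      simp only [wkTm, wkVar, wkVar_id]

theorem trimSub_idSub : ∀ {Γ Θ : Cx} (e : Ext Θ Γ), trimSub (idSub Γ) e = ⟨Θ, idSub Θ, e⟩
  | _, _, .nil => by simp only [idSub]; rw [trimSub_lock]
  | _, _, .var e => by
      simp only [idSub]
      rw [trimSub_var, trimSub_wkSub, trimSub_idSub e, factor_drop, factor_id e, wkSub_id]

theorem subst_idSub : ∀ {Γ : Cx} {A : Ty} (t : Tm Γ A), subst (idSub Γ) t = t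
  | _, _, .var v => by simp only [subst, substVar_idSub]
  | _, _, .lam t => by
      have ih := subst_idSub t
      simp only [idSub] at ih
      simp only [subst, ih]
  | _, _, .app t u => by simp only [subst, subst_idSub t, subst_idSub u]
  | _, _, .box t => by
      have ih := subst_idSub t
      simp only [idSub] at ih
      simp only [subst, ih]
  | _, _, .unbox t e => by
      simp only [subst]
      rw [trimSub_idSub e, subst_idSub t]
/-! ### Composition of substitutions -/

/-- Composition of substitutions. -/
def compSub : {Γ Δ Θ : Cx} → Sub Γ Δ → Sub Δ Θ → Sub Γ Θ
  | _, _, _, _, .empty => .empty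
  | _, _, _, s₁, .snoc s₂ t => .snoc (compSub s₁ s₂) (subst s₁ t)
  | _, _, _, s₁, .lock s₂ e =>
    .lock (compSub (trimSub s₁ e).2.1 s₂) (trimSub s₁ e).2.2

theorem substVar_compSub : ∀ {Γ Δ Θ : Cx} {A : Ty} (s₁ : Sub Γ Δ) (s₂ : Sub Δ Θ)
    (v : Var Θ A), subst s₁ (substVar s₂ v) = substVar (compSub s₁ s₂) v
  | _, _, _, _, s₁, .snoc s₂ t, .zero => by simp only [compSub, substVar]
  | _, _, _, _, s₁, .snoc s₂ t, .succ v => by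
      simp only [compSub, substVar, substVar_compSub s₁ s₂ v]

theorem compSub_wkSub_right : ∀ {Γ Δ Δ' Θ : Cx} (s₁ : Sub Γ Δ') (o : Ope Δ Δ') (s₂ : Sub Δ Θ),
    compSub s₁ (wkSub o s₂) = compSub (restrictSub o s₁) s₂
  | _, _, _, _, s₁, o, .empty => by simp only [wkSub, compSub]
  | _, _, _, _, s₁, o, .snoc s₂ t => by
      simp only [wkSub, compSub, compSub_wkSub_right s₁ o s₂, subst_wkTm]
  | _, _, _, _, s₁, o, .lock s₂ e => by
      simp only [wkSub, compSub]
      rw [trimSub_restrictSub o s₁ e, compSub_wkSub_right _ (factor e o).2.1 s₂]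

theorem compSub_wkSub_left : ∀ {Γ Γ' Δ Θ : Cx} (o : Ope Γ Γ') (s₁ : Sub Γ Δ) (s₂ : Sub Δ Θ),
    compSub (wkSub o s₁) s₂ = wkSub o (compSub s₁ s₂)
  | _, _, _, _, o, s₁, .empty => by simp only [wkSub, compSub]
  | _, _, _, _, o, s₁, .snoc s₂ t => by
      simp only [compSub, wkSub, compSub_wkSub_left o s₁ s₂, wkTm_subst]
  | _, _, _, _, o, s₁, .lock s₂ e => by
      simp only [compSub, wkSub]
      rw [trimSub_wkSub o s₁ e, compSub_wkSub_left (factor (trimSub s₁ e).2.2 o).2.1 _ s₂]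

theorem trimSub_compSub : ∀ {Γ Δ Θ Θ' : Cx} (s₁ : Sub Γ Δ) (s₂ : Sub Δ Θ) (e : Ext Θ' Θ),
    trimSub (compSub s₁ s₂) e =
      ⟨(trimSub s₁ (trimSub s₂ e).2.2).1,
        compSub (trimSub s₁ (trimSub s₂ e).2.2).2.1 (trimSub s₂ e).2.1,
        (trimSub s₁ (trimSub s₂ e).2.2).2.2⟩
  | _, _, _, _, s₁, .lock s₂ e₀, .nil => by
      rw [trimSub_lock s₂ e₀]
      simp only [compSub]
      rw [trimSub_lock]
  | _, _, _, _, s₁, .snoc s₂ t, .var e => by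
      rw [trimSub_var s₂ t e]
      simp only [compSub]
      rw [trimSub_var, trimSub_compSub s₁ s₂ e]

theorem subst_subst : ∀ {Γ Δ Θ : Cx} {A : Ty} (s₁ : Sub Γ Δ) (s₂ : Sub Δ Θ) (t : Tm Θ A),
    subst s₁ (subst s₂ t) = subst (compSub s₁ s₂) t
  | _, _, _, _, s₁, s₂, .var v => by simp only [subst, substVar_compSub]
  | _, _, _, _, s₁, s₂, .app t u => by
      simp only [subst, subst_subst s₁ s₂ t, subst_subst s₁ s₂ u]
  | _, _, _, _, s₁, s₂, .lam t => by
      simp only [subst]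
      rw [subst_subst _ _ t]
      congr 2
      simp only [compSub, subst, substVar, compSub_wkSub_right, restrictSub]
      rw [restrictSub_id, compSub_wkSub_left]
  | _, _, _, _, s₁, s₂, .box t => by
      simp only [subst]
      rw [subst_subst _ _ t]
      congr 2
  | _, _, _, _, s₁, s₂, .unbox t e => by
      simp only [subst]
      rw [trimSub_compSub s₁ s₂ e, subst_subst _ _ t]

theorem compSub_idSub_left : ∀ {Γ Δ : Cx} (s : Sub Γ Δ), compSub (idSub Γ) s = s
  | _, _, .empty => rfl
  | _, _, .snoc s t => by simp only [compSub, compSub_idSub_left s, subst_idSub]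
  | _, _, .lock s e => by
      simp only [compSub]
      rw [trimSub_idSub e, compSub_idSub_left s]

/-- The key β-interaction: instantiating a lifted weakened substitution. -/
theorem subst_beta_comm {Γ Γ' Δ : Cx} {A B : Ty} (o : Ope Γ Γ') (s : Sub Γ Δ)
    (u : Tm Γ' A) (t : Tm (Cx.snoc Δ A) B) :
    subst (.snoc (idSub Γ') u)
        (wkTm (.keep o) (subst (.snoc (wkSub (.drop (idOpe Γ)) s) (.var .zero)) t))
      = subst (.snoc (wkSub o s) u) t := by
  rw [wkTm_subst, subst_subst]
  congr 2
  simp only [wkSub, wkTm, wkVar, compSub, subst, substVar]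
  rw [wkSub_comp, compSub_wkSub_right]
  simp only [compOpe, compOpe_id_left, restrictSub]
  rw [restrictSub_idSub, compSub_wkSub_left, compSub_idSub_left]

/-! ### Conversion is stable under weakening -/

theorem wkConv {Γ Γ' : Cx} {A : Ty} {t u : Tm Γ A} (o : Ope Γ Γ') (h : Conv t u) :
    Conv (wkTm o t) (wkTm o u) := by
  induction h generalizing Γ' with
  | refl t => exact .refl _
  | symm _ ih => exact .symm (ih o)
  | trans _ _ ih₁ ih₂ => exact .trans (ih₁ o) (ih₂ o)
  | congLam _ ih => simp only [wkTm]; exact .congLam (ih (.keep o))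
  | congApp _ _ ih₁ ih₂ => simp only [wkTm]; exact .congApp (ih₁ o) (ih₂ o)
  | congBox _ ih => simp only [wkTm]; exact .congBox (ih (.keepLock o))
  | congUnbox _ ih => simp only [wkTm]; exact .congUnbox (ih _)
  | betaFun t u =>
      have h := Conv.betaFun (wkTm (.keep o) t) (wkTm o u)
      rw [subst_wkTm] at h
      simp only [restrictSub] at h
      rw [restrictSub_idSub] at h
      simp only [wkTm]
      rw [wkTm_subst o _ t]
      simp only [wkSub]
      exact h
  | etaFun t =>
      have h := Conv.etaFun (wkTm o t)
      rw [wkTm_comp] at h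
      simp only [compOpe, compOpe_id_right] at h
      simp only [wkTm, wkVar]
      rw [wkTm_comp]
      simp only [compOpe, compOpe_id_left]
      exact h
  | betaBox t e =>
      have h := Conv.betaBox (wkTm (.keepLock (factor e o).2.1) t) (factor e o).2.2
      rw [wkTm_comp, ← factorOpe_comp, ← wkTm_comp] at h
      simp only [wkTm]
      exact h
  | etaBox t =>
      have h := Conv.etaBox (wkTm o t)
      simp only [wkTm]
      rw [factor_lock o]
      exact h
/-! ### Weakening of normal forms: functor laws -/

mutual
theorem wkNf_id : ∀ {Γ : Cx} {A : Ty} (n : Nf Γ A), wkNf (idOpe Γ) n = n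
  | _, _, .up n => by simp only [wkNf, wkNe_id n]
  | _, _, .lam n => by
      have ih := wkNf_id n
      simp only [idOpe] at ih
      simp only [wkNf, ih]
  | _, _, .box n => by
      have ih := wkNf_id n
      simp only [idOpe] at ih
      simp only [wkNf, ih]

theorem wkNe_id : ∀ {Γ : Cx} {A : Ty} (n : Ne Γ A), wkNe (idOpe Γ) n = n
  | _, _, .var v => by simp only [wkNe, wkVar_id]
  | _, _, .app n m => by simp only [wkNe, wkNe_id n, wkNf_id m]
  | _, _, .unbox n e => by
      simp only [wkNe]
      rw [factor_id e, wkNe_id n]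
end

mutual
theorem wkNf_comp : ∀ {Γ Γ' Γ'' : Cx} {A : Ty} (o : Ope Γ Γ') (p : Ope Γ' Γ'') (n : Nf Γ A),
    wkNf p (wkNf o n) = wkNf (compOpe o p) n
  | _, _, _, _, o, p, .up n => by simp only [wkNf, wkNe_comp o p n]
  | _, _, _, _, o, p, .lam n => by
      have ih := wkNf_comp (.keep o) (.keep p) n
      simp only [compOpe] at ih
      simp only [wkNf, ih]
  | _, _, _, _, o, p, .box n => by
      have ih := wkNf_comp (.keepLock o) (.keepLock p) n
      simp only [compOpe] at ih
      simp only [wkNf, ih]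

theorem wkNe_comp : ∀ {Γ Γ' Γ'' : Cx} {A : Ty} (o : Ope Γ Γ') (p : Ope Γ' Γ'') (n : Ne Γ A),
    wkNe p (wkNe o n) = wkNe (compOpe o p) n
  | _, _, _, _, o, p, .var v => by simp only [wkNe, wkVar_comp]
  | _, _, _, _, o, p, .app n m => by simp only [wkNe, wkNe_comp o p n, wkNf_comp o p m]
  | _, _, _, _, o, p, .unbox n e => by
      simp only [wkNe]
      rw [factor_comp e o p,
        wkNe_comp (factor e o).2.1 (factor (factor e o).2.2 p).2.1 n]
end

/-! ### Functor laws for the semantic weakening -/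

theorem wkSemTy_id : ∀ (A : Ty) {Δ : Cx} (d : SemTy A Δ), wkSemTy A (idOpe Δ) d = d
  | .base, _, n => wkNe_id n
  | .arr A B, _, f => by
      funext Γ'' o' a
      simp only [wkSemTy, compOpe_id_left]
  | .box A, _, b => by
      funext Γ'' o' Θ e
      simp only [wkSemTy, compOpe_id_left]

theorem wkSemTy_comp : ∀ (A : Ty) {Δ Δ' Δ'' : Cx} (o : Ope Δ Δ') (p : Ope Δ' Δ'')
    (d : SemTy A Δ), wkSemTy A p (wkSemTy A o d) = wkSemTy A (compOpe o p) d
  | .base, _, _, _, o, p, n => wkNe_comp o p n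
  | .arr A B, _, _, _, o, p, f => by
      funext Γ'' o' a
      simp only [wkSemTy, compOpe_assoc]
  | .box A, _, _, _, o, p, b => by
      funext Γ'' o' Θ e
      simp only [wkSemTy, compOpe_assoc]

theorem wkSemCx_id : ∀ (Γ : Cx) {Δ : Cx} (γ : SemCx Γ Δ), wkSemCx Γ (idOpe Δ) γ = γ
  | .nil, _, γ => rfl
  | .snoc Γ A, _, γ => by
      show (wkSemCx Γ _ γ.1, wkSemTy A _ γ.2) = γ
      rw [wkSemCx_id Γ γ.1, wkSemTy_id A γ.2]
      rfl
  | .lock Γ, _, γ => by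
      show ⟨(factor γ.2.2 _).1, wkSemCx Γ (factor γ.2.2 _).2.1 γ.2.1, (factor γ.2.2 _).2.2⟩ = γ
      rw [factor_id γ.2.2, wkSemCx_id Γ γ.2.1]
      rfl

theorem wkSemCx_comp : ∀ (Γ : Cx) {Δ Δ' Δ'' : Cx} (o : Ope Δ Δ') (p : Ope Δ' Δ'')
    (γ : SemCx Γ Δ), wkSemCx Γ p (wkSemCx Γ o γ) = wkSemCx Γ (compOpe o p) γ
  | .nil, _, _, _, o, p, γ => rfl
  | .snoc Γ A, _, _, _, o, p, γ => by
      show (wkSemCx Γ p (wkSemCx Γ o γ.1), wkSemTy A p (wkSemTy A o γ.2)) = _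
      rw [wkSemCx_comp Γ o p γ.1, wkSemTy_comp A o p γ.2]
      rfl
  | .lock Γ, _, _, _, o, p, γ => by
      show (⟨(factor (factor γ.2.2 o).2.2 p).1,
          wkSemCx Γ (factor (factor γ.2.2 o).2.2 p).2.1 (wkSemCx Γ (factor γ.2.2 o).2.1 γ.2.1),
          (factor (factor γ.2.2 o).2.2 p).2.2⟩ : SemCx (.lock Γ) _)
        = ⟨(factor γ.2.2 (compOpe o p)).1,
            wkSemCx Γ (factor γ.2.2 (compOpe o p)).2.1 γ.2.1,
            (factor γ.2.2 (compOpe o p)).2.2⟩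
      rw [factor_comp γ.2.2 o p,
        wkSemCx_comp Γ (factor γ.2.2 o).2.1 (factor (factor γ.2.2 o).2.2 p).2.1 γ.2.1]

/-! ### The partial equivalence relation on semantic values -/

/-- Kripke partial equivalence on semantic values; at function and box types it
builds in uniformity (naturality) with respect to weakening. -/
def SemEq : (A : Ty) → {Γ : Cx} → SemTy A Γ → SemTy A Γ → Prop
  | .base, _, n, n' => n = n'
  | .arr A B, Γ, f, f' => ∀ Γ' (o : Ope Γ Γ') Γ'' (o' : Ope Γ' Γ'') (a a' : SemTy A Γ'),
      SemEq A a a' →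
        SemEq B (wkSemTy B o' (f Γ' o a)) (f' Γ'' (compOpe o o') (wkSemTy A o' a'))
  | .box A, Γ, b, b' => ∀ Γ' (o : Ope Γ Γ') Δ (e : Ext Γ' Δ) Δ' (o' : Ope Δ Δ'),
      SemEq A (wkSemTy A o' (b Γ' o Δ e))
        (b' (factor e o').1 (compOpe o (factor e o').2.1) Δ' (factor e o').2.2)

/-- Pointwise partial equivalence on semantic environments. -/
def SemEqCx : (Γ : Cx) → {Δ : Cx} → SemCx Γ Δ → SemCx Γ Δ → Prop
  | .nil, _, _, _ => True
  | .snoc Γ A, _, γ, γ' => SemEqCx Γ γ.1 γ'.1 ∧ SemEq A γ.2 γ'.2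
  | .lock Γ, _, γ, γ' =>
      ∃ h : γ.1 = γ'.1, SemEqCx Γ (h ▸ γ.2.1) γ'.2.1 ∧ (h ▸ γ.2.2) = γ'.2.2

theorem semEq_wk : ∀ (A : Ty) {Γ Γ' : Cx} (o : Ope Γ Γ') {d d' : SemTy A Γ},
    SemEq A d d' → SemEq A (wkSemTy A o d) (wkSemTy A o d')
  | .base, _, _, o, n, n', h => by exact congrArg (wkNe o) h
  | .arr A B, _, _, o, f, f', h => by
      intro Γ' o₁ Γ'' o' a a' ha
      have := h Γ' (compOpe o o₁) Γ'' o' a a' ha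
      simpa only [wkSemTy, compOpe_assoc] using this
  | .box A, _, _, o, b, b', h => by
      intro Γ' o₁ Δ e Δ' o'
      have := h Γ' (compOpe o o₁) Δ e Δ' o'
      simpa only [wkSemTy, compOpe_assoc] using this

theorem semEq_app {A B : Ty} {Γ Γ' : Cx} {f f' : SemTy (.arr A B) Γ} (o : Ope Γ Γ')
    {a a' : SemTy A Γ'} (h : SemEq (.arr A B) f f') (ha : SemEq A a a') :
    SemEq B (f Γ' o a) (f' Γ' o a') := by
  have := h Γ' o Γ' (idOpe Γ') a a' ha
  rwa [wkSemTy_id, wkSemTy_id, compOpe_id_right] at this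

theorem semEq_unbox {A : Ty} {Γ Γ' Δ : Cx} {b b' : SemTy (.box A) Γ} (o : Ope Γ Γ')
    (e : Ext Γ' Δ) (h : SemEq (.box A) b b') : SemEq A (b Γ' o Δ e) (b' Γ' o Δ e) := by
  have := h Γ' o Δ e Δ (idOpe Δ)
  rwa [factor_id e, wkSemTy_id, compOpe_id_right] at this

mutual
theorem semEq_symm : ∀ (A : Ty) {Γ : Cx} {d d' : SemTy A Γ}, SemEq A d d' → SemEq A d' d
  | .base, _, _, _, h => h.symm
  | .arr A B, Γ, f, f', h => by
      intro Γ' o Γ'' o' a a' ha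
      have ha' : SemEq A a' a := semEq_symm A ha
      have ha'a' : SemEq A a' a' := semEq_trans A ha' ha
      have p2 : SemEq B (f' Γ' o a) (f Γ' o a') :=
        semEq_symm B (semEq_app o h ha')
      have p3 := semEq_wk B o' p2
      have p4 := h Γ' o Γ'' o' a' a ha'
      have p5 : SemEq B (f' Γ'' (compOpe o o') (wkSemTy A o' a))
          (f' Γ'' (compOpe o o') (wkSemTy A o' a')) := by
        have q2 := semEq_app (compOpe o o') h (semEq_wk A o' (semEq_trans A ha ha'))
        have q1 := semEq_app (compOpe o o') h (semEq_wk A o' ha)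
        exact semEq_trans B (semEq_symm B q2) q1
      have r : SemEq B (f' Γ'' (compOpe o o') (wkSemTy A o' a'))
          (f Γ'' (compOpe o o') (wkSemTy A o' a')) :=
        semEq_symm B (semEq_app (compOpe o o') h (semEq_wk A o' ha'a'))
      exact semEq_trans B p3 (semEq_trans B p4 (semEq_trans B p5 r))
  | .box A, Γ, b, b', h => by
      intro Γ' o Δ e Δ' o'
      have plain : ∀ {Γ₁} (o₁ : Ope Γ Γ₁) {Δ₁} (e₁ : Ext Γ₁ Δ₁),
          SemEq A (b Γ₁ o₁ Δ₁ e₁) (b' Γ₁ o₁ Δ₁ e₁) := fun {Γ₁} o₁ {Δ₁} e₁ => semEq_unbox o₁ e₁ h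
      have q2 := semEq_wk A o' (semEq_symm A (plain o e))
      have q3 := h Γ' o Δ e Δ' o'
      have q4 := semEq_symm A (plain (compOpe o (factor e o').2.1) (factor e o').2.2)
      exact semEq_trans A q2 (semEq_trans A q3 q4)

theorem semEq_trans : ∀ (A : Ty) {Γ : Cx} {d₁ d₂ d₃ : SemTy A Γ},
    SemEq A d₁ d₂ → SemEq A d₂ d₃ → SemEq A d₁ d₃
  | .base, _, _, _, _, h₁, h₂ => h₁.trans h₂
  | .arr A B, Γ, f, g, k, h₁, h₂ => by
      intro Γ' o Γ'' o' a a' ha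
      have haa : SemEq A a a := semEq_trans A ha (semEq_symm A ha)
      have s1 := h₁ Γ' o Γ'' o' a a haa
      have s2 := semEq_app (compOpe o o') h₂ (semEq_wk A o' ha)
      exact semEq_trans B s1 s2
  | .box A, Γ, b, c, d, h₁, h₂ => by
      intro Γ' o Δ e Δ' o'
      have s1 := h₁ Γ' o Δ e Δ' o'
      have s2 := semEq_unbox (compOpe o (factor e o').2.1) (factor e o').2.2 h₂
      exact semEq_trans A s1 s2
end

theorem semEqCx_symm : ∀ (Γ : Cx) {Δ : Cx} {γ γ' : SemCx Γ Δ},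
    SemEqCx Γ γ γ' → SemEqCx Γ γ' γ
  | .nil, _, _, _, _ => trivial
  | .snoc Γ A, _, γ, γ', h => ⟨semEqCx_symm Γ h.1, semEq_symm A h.2⟩
  | .lock Γ, _, γ, γ', h => by
      obtain ⟨γ₁, γ₂, γ₃⟩ := γ
      obtain ⟨γ₁', γ₂', γ₃'⟩ := γ'
      obtain ⟨h₁, h₂, h₃⟩ := h
      cases h₁; cases h₃
      exact ⟨rfl, semEqCx_symm Γ h₂, rfl⟩

theorem semEqCx_trans : ∀ (Γ : Cx) {Δ : Cx} {γ₁ γ₂ γ₃ : SemCx Γ Δ},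
    SemEqCx Γ γ₁ γ₂ → SemEqCx Γ γ₂ γ₃ → SemEqCx Γ γ₁ γ₃
  | .nil, _, _, _, _, _, _ => trivial
  | .snoc Γ A, _, _, _, _, h₁, h₂ =>
      ⟨semEqCx_trans Γ h₁.1 h₂.1, semEq_trans A h₁.2 h₂.2⟩
  | .lock Γ, _, γ₁, γ₂, γ₃, h₁, h₂ => by
      obtain ⟨a₁, a₂, a₃⟩ := γ₁
      obtain ⟨b₁, b₂, b₃⟩ := γ₂
      obtain ⟨c₁, c₂, c₃⟩ := γ₃
      obtain ⟨e₁, e₂, e₃⟩ := h₁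
      obtain ⟨g₁, g₂, g₃⟩ := h₂
      cases e₁; cases g₁; cases e₃; cases g₃
      exact ⟨rfl, semEqCx_trans Γ e₂ g₂, rfl⟩

theorem semEqCx_wk : ∀ (Γ : Cx) {Δ Δ' : Cx} (o : Ope Δ Δ') {γ γ' : SemCx Γ Δ},
    SemEqCx Γ γ γ' → SemEqCx Γ (wkSemCx Γ o γ) (wkSemCx Γ o γ')
  | .nil, _, _, o, _, _, _ => trivial
  | .snoc Γ A, _, _, o, γ, γ', h => ⟨semEqCx_wk Γ o h.1, semEq_wk A o h.2⟩
  | .lock Γ, _, _, o, γ, γ', h => by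
      obtain ⟨γ₁, γ₂, γ₃⟩ := γ
      obtain ⟨γ₁', γ₂', γ₃'⟩ := γ'
      obtain ⟨h₁, h₂, h₃⟩ := h
      cases h₁; cases h₃
      exact ⟨rfl, semEqCx_wk Γ (factor γ₃ o).2.1 h₂, rfl⟩
/-! ### Reification and reflection -/

mutual
/-- Reification of semantic values as normal forms. -/
def reify : (A : Ty) → {Γ : Cx} → SemTy A Γ → Nf Γ A
  | .base, _, n => .up n
  | .arr A B, Γ, f =>
      .lam (reify B (f (Cx.snoc Γ A) (.drop (idOpe Γ)) (reflect A (.var .zero))))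
  | .box A, Γ, b => .box (reify A (b Γ (idOpe Γ) (Cx.lock Γ) .nil))

/-- Reflection of neutrals as semantic values. -/
def reflect : (A : Ty) → {Γ : Cx} → Ne Γ A → SemTy A Γ
  | .base, _, n => n
  | .arr A B, _, n => fun _ o a => reflect B (.app (wkNe o n) (reify A a))
  | .box A, _, n => fun _ o _ e => reflect A (.unbox (wkNe o n) e)
end

theorem wkNe_var_zero {Γ Γ' : Cx} {A : Ty} (o : Ope Γ Γ') :
    wkNe (.keep (A := A) o) (.var .zero) = .var .zero := by
  simp only [wkNe, wkVar]

mutual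
theorem reify_eq : ∀ (A : Ty) {Γ : Cx} {d d' : SemTy A Γ},
    SemEq A d d' → reify A d = reify A d'
  | .base, _, d, d', h => congrArg Nf.up h
  | .arr A B, Γ, f, f', h => by
      simp only [reify]
      exact congrArg Nf.lam
        (reify_eq B (semEq_app (.drop (idOpe Γ)) h (reflect_self A (.var .zero))))
  | .box A, Γ, b, b', h => by
      simp only [reify]
      exact congrArg Nf.box (reify_eq A (semEq_unbox (idOpe Γ) .nil h))

theorem reify_wk : ∀ (A : Ty) {Γ Γ' : Cx} (o : Ope Γ Γ') {d : SemTy A Γ},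
    SemEq A d d → wkNf o (reify A d) = reify A (wkSemTy A o d)
  | .base, _, _, o, d, _ => by simp only [reify, wkNf, wkSemTy]
  | .arr A B, Γ, Γ', o, f, h => by
      simp only [reify, wkNf, wkSemTy]
      have hz := reflect_self A (Γ := Cx.snoc Γ A) (.var (.zero (A := A)))
      have step1 := reify_wk B (.keep o) (semEq_app (.drop (idOpe Γ)) h hz)
      rw [step1]
      refine congrArg Nf.lam (reify_eq B ?_)
      have h1 := h (Cx.snoc Γ A) (.drop (idOpe Γ)) (Cx.snoc Γ' A) (.keep o) _ _ hz
      have h2 : SemEq A (wkSemTy A (.keep (A := A) o) (reflect A (.var .zero)))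
          (reflect A (.var .zero)) := by
        have := reflect_wk A (.keep (A := A) o) (.var (.zero (A := A)))
        rwa [wkNe_var_zero] at this
      have h3 := semEq_app (compOpe (.drop (idOpe Γ)) (.keep o)) h h2
      have h4 := semEq_trans B h1 h3
      have : compOpe (.drop (A := A) (idOpe Γ)) (.keep o)
          = compOpe o (.drop (idOpe Γ')) := by
        simp only [compOpe, compOpe_id_left, compOpe_id_right]
      rwa [this] at h4
  | .box A, Γ, Γ', o, b, h => by
      simp only [reify, wkNf, wkSemTy]
      have step1 := reify_wk A (.keepLock o) (semEq_unbox (idOpe Γ) .nil h)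
      rw [step1]
      refine congrArg Nf.box (reify_eq A ?_)
      have h1 := h Γ (idOpe Γ) (Cx.lock Γ) .nil (Cx.lock Γ') (.keepLock o)
      rw [factor_lock o, compOpe_id_left] at h1
      show SemEq A _ (b Γ' (compOpe o (idOpe Γ')) (Cx.lock Γ') .nil)
      rw [compOpe_id_right]
      exact h1

theorem reflect_self : ∀ (A : Ty) {Γ : Cx} (n : Ne Γ A), SemEq A (reflect A n) (reflect A n)
  | .base, _, n => rfl
  | .arr A B, Γ, n => by
      intro Γ' o Γ'' o' a a' ha
      simp only [reflect]
      have haa := semEq_trans A ha (semEq_symm A ha)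
      have w := reflect_wk B o' (.app (wkNe o n) (reify A a))
      simp only [wkNe] at w
      rw [wkNe_comp, reify_wk A o' haa, reify_eq A (semEq_wk A o' ha)] at w
      exact w
  | .box A, Γ, n => by
      intro Γ' o Δ e Δ' o'
      simp only [reflect]
      have w := reflect_wk A o' (.unbox (wkNe o n) e)
      simp only [wkNe] at w
      rw [wkNe_comp] at w
      exact w

theorem reflect_wk : ∀ (A : Ty) {Γ Γ' : Cx} (o : Ope Γ Γ') (n : Ne Γ A),
    SemEq A (wkSemTy A o (reflect A n)) (reflect A (wkNe o n))
  | .base, _, _, o, n => rfl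
  | .arr A B, Γ, Γ', o, n => by
      intro Γ₁ o₁ Γ₂ o' a a' ha
      have haa := semEq_trans A ha (semEq_symm A ha)
      have w := reflect_wk B o' (.app (wkNe (compOpe o o₁) n) (reify A a))
      simp only [wkNe] at w
      rw [wkNe_comp, reify_wk A o' haa, reify_eq A (semEq_wk A o' ha),
        compOpe_assoc, ← wkNe_comp o (compOpe o₁ o') n] at w
      exact w
  | .box A, Γ, Γ', o, n => by
      intro Γ₁ o₁ Δ e Δ' o'
      have w := reflect_wk A o' (.unbox (wkNe (compOpe o o₁) n) e)
      simp only [wkNe] at w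
      rw [wkNe_comp, compOpe_assoc, ← wkNe_comp o (compOpe o₁ (factor e o').2.1) n] at w
      exact w
end
/-! ### Environment lemmas -/

theorem lookup_wk : ∀ {Γ : Cx} {A : Ty} (v : Var Γ A) {Δ Δ' : Cx} (o : Ope Δ Δ')
    (γ : SemCx Γ Δ), lookup v (wkSemCx Γ o γ) = wkSemTy A o (lookup v γ)
  | _, _, .zero, _, _, o, γ => rfl
  | _, _, .succ v, _, _, o, γ => lookup_wk v o γ.1

theorem lookup_semEq : ∀ {Γ : Cx} {A : Ty} (v : Var Γ A) {Δ : Cx} {γ γ' : SemCx Γ Δ},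
    SemEqCx Γ γ γ' → SemEq A (lookup v γ) (lookup v γ')
  | _, _, .zero, _, _, _, h => h.2
  | _, _, .succ v, _, _, _, h => lookup_semEq v h.1

theorem trimSem_semEq : ∀ {Θ Γ : Cx} (e : Ext Θ Γ) {Δ : Cx} {γ γ' : SemCx Γ Δ},
    SemEqCx Γ γ γ' → SemEqCx (.lock Θ) (trimSem e γ) (trimSem e γ')
  | _, _, .nil, _, _, _, h => h
  | _, _, .var e, _, _, _, h => trimSem_semEq e h.1

theorem trimSem_wk : ∀ {Θ Γ : Cx} (e : Ext Θ Γ) {Δ Δ' : Cx} (o : Ope Δ Δ')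
    (γ : SemCx Γ Δ), trimSem e (wkSemCx Γ o γ) = wkSemCx (.lock Θ) o (trimSem e γ)
  | _, _, .nil, _, _, o, γ => rfl
  | _, _, .var e, _, _, o, γ => trimSem_wk e o γ.1

/-- Unbox congruence for evaluation, destructured form. -/
theorem unbox_eval_semEq {Θ : Cx} {A : Ty} {Δ : Cx} {t t' : Tm Θ (Ty.box A)}
    (ht : ∀ {Δ₀ : Cx} {ρ ρ' : SemCx Θ Δ₀}, SemEqCx Θ ρ ρ' →
      SemEq (Ty.box A) (eval t Δ₀ ρ) (eval t' Δ₀ ρ'))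
    {D D' : SemCx (Cx.lock Θ) Δ} (h : SemEqCx (Cx.lock Θ) D D') :
    SemEq A (eval t D.1 D.2.1 D.1 (idOpe D.1) Δ D.2.2)
      (eval t' D'.1 D'.2.1 D'.1 (idOpe D'.1) Δ D'.2.2) := by
  obtain ⟨D1, D2, D3⟩ := D
  obtain ⟨D1', D2', D3'⟩ := D'
  obtain ⟨h1, h2, h3⟩ := h
  cases h1; cases h3
  exact semEq_unbox _ _ (ht h2)

/-! ### The fundamental congruence and naturality lemmas for evaluation -/

mutual

theorem eval_semEq : ∀ {Γ : Cx} {A : Ty} (t : Tm Γ A) {Δ : Cx} {γ γ' : SemCx Γ Δ},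
    SemEqCx Γ γ γ' → SemEq A (eval t Δ γ) (eval t Δ γ')
  | _, _, .var v, _, γ, γ', hγ => lookup_semEq v hγ
  | Γ, _, .lam (A := A) (B := B) t, Δ, γ, γ', hγ => by
      intro Γ₁ o Γ₂ o' a a' ha
      have hmem : SemEqCx (Cx.snoc Γ A) (wkSemCx Γ o γ, a) (wkSemCx Γ o γ', a') :=
        ⟨semEqCx_wk Γ o hγ, ha⟩
      have h₁ := eval_wk t o' (semEqCx_symm _ hmem)
      have h₂ := semEq_symm B h₁
      simp only [wkSemCx] at h₂
      rw [wkSemCx_comp] at h₂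
      exact h₂
  | _, _, .app t u, Δ, γ, γ', hγ =>
      semEq_app (idOpe Δ) (eval_semEq t hγ) (eval_semEq u hγ)
  | Γ, _, .box (A := A) t, Δ, γ, γ', hγ => by
      intro Γ₁ o Δ₁ e Δ' o'
      have hmem : SemEqCx (Cx.lock Γ)
          (⟨Γ₁, wkSemCx Γ o γ', e⟩ : SemCx (Cx.lock Γ) Δ₁)
          (⟨Γ₁, wkSemCx Γ o γ, e⟩ : SemCx (Cx.lock Γ) Δ₁) :=
        ⟨rfl, semEqCx_wk Γ o (semEqCx_symm Γ hγ), rfl⟩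
      have h₁ := semEq_symm A (eval_wk t o' hmem)
      simp only [wkSemCx] at h₁
      rw [wkSemCx_comp] at h₁
      exact h₁
  | _, _, .unbox t e, Δ, γ, γ', hγ =>
      unbox_eval_semEq (fun h => eval_semEq t h) (trimSem_semEq e hγ)

theorem eval_wk : ∀ {Γ : Cx} {A : Ty} (t : Tm Γ A) {Δ Δ' : Cx} (o : Ope Δ Δ')
    {γ γ' : SemCx Γ Δ}, SemEqCx Γ γ γ' →
    SemEq A (eval t Δ' (wkSemCx Γ o γ)) (wkSemTy A o (eval t Δ γ'))
  | Γ, A, .var v, _, _, o, γ, γ', hγ => by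
      have h := semEq_wk A o (lookup_semEq v hγ)
      rw [← lookup_wk v o γ] at h
      exact h
  | Γ, _, .lam (A := A) (B := B) t, Δ, Δ', o, γ, γ', hγ => by
      intro Γ₁ o₁ Γ₂ o' a a' ha
      have hmem : SemEqCx (Cx.snoc Γ A)
          (wkSemCx Γ (compOpe o o₁) γ', a') (wkSemCx Γ o₁ (wkSemCx Γ o γ), a) := by
        refine ⟨?_, semEq_symm A ha⟩
        rw [wkSemCx_comp]
        exact semEqCx_wk Γ _ (semEqCx_symm Γ hγ)
      have h₁ := semEq_symm B (eval_wk t o' hmem)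
      simp only [wkSemCx] at h₁
      rw [wkSemCx_comp Γ (compOpe o o₁) o' γ', compOpe_assoc] at h₁
      exact h₁
  | Γ, _, .app (A := A) (B := B) t u, Δ, Δ', o, γ, γ', hγ => by
      have hself := semEqCx_trans Γ (semEqCx_symm Γ hγ) hγ
      have h1 := eval_wk t o hγ
      have h2 := eval_wk u o hγ
      have step1' : SemEq B (eval t Δ' (wkSemCx Γ o γ) Δ' (idOpe Δ') (eval u Δ' (wkSemCx Γ o γ)))
          (eval t Δ γ' Δ' (compOpe o (idOpe Δ')) (wkSemTy A o (eval u Δ γ'))) :=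
        semEq_app (idOpe Δ') h1 h2
      rw [compOpe_id_right] at step1'
      have h3 := eval_semEq t hself
      have h4 := h3 Δ (idOpe Δ) Δ' o (eval u Δ γ') (eval u Δ γ')
        (eval_semEq u hself)
      rw [compOpe_id_left] at h4
      have h4' : SemEq B (wkSemTy B o (eval t Δ γ' Δ (idOpe Δ) (eval u Δ γ')))
          (eval t Δ γ' Δ' o (wkSemTy A o (eval u Δ γ'))) := h4
      exact semEq_trans B step1' (semEq_symm B h4')
  | Γ, _, .box (A := A) t, Δ, Δ', o, γ, γ', hγ => by
      intro Γ₁ o₁ Δ₁ e Δ'' o'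
      have hmem : SemEqCx (Cx.lock Γ)
          (⟨Γ₁, wkSemCx Γ (compOpe o o₁) γ', e⟩ : SemCx (Cx.lock Γ) Δ₁)
          (⟨Γ₁, wkSemCx Γ o₁ (wkSemCx Γ o γ), e⟩ : SemCx (Cx.lock Γ) Δ₁) := by
        refine ⟨rfl, ?_, rfl⟩
        rw [wkSemCx_comp]
        exact semEqCx_wk Γ _ (semEqCx_symm Γ hγ)
      have h₁ := semEq_symm A (eval_wk t o' hmem)
      simp only [wkSemCx] at h₁
      rw [wkSemCx_comp Γ (compOpe o o₁) _ γ', compOpe_assoc] at h₁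
      exact h₁
  | Θ', _, .unbox (A := A') (Δ := Θ) t e, Δ, Δ', o, γ, γ', hγ => by
      rw [show eval (Tm.unbox t e) Δ' (wkSemCx Θ' o γ)
          = eval t _ (trimSem e (wkSemCx Θ' o γ)).2.1 _ (idOpe _) Δ'
              (trimSem e (wkSemCx Θ' o γ)).2.2 from rfl]
      rw [show eval (Tm.unbox t e) Δ γ'
          = eval t _ (trimSem e γ').2.1 _ (idOpe (trimSem e γ').1) Δ
              (trimSem e γ').2.2 from rfl]
      rw [trimSem_wk e o γ]
      have hD := trimSem_semEq e hγ
      revert hD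
      show SemEqCx (Cx.lock Θ) (trimSem e γ) (trimSem e γ') → _
      generalize trimSem e γ = D
      generalize trimSem e γ' = D'
      intro hD
      obtain ⟨D1, D2, D3⟩ := D
      obtain ⟨D1', D2', D3'⟩ := D'
      obtain ⟨h1, h2, h3⟩ := hD
      cases h1; cases h3
      have h2self := semEqCx_trans Θ (semEqCx_symm Θ h2) h2
      have hb := eval_wk t (factor D3 o).2.1 h2
      have step1 : SemEq A' (eval t _ (wkSemCx Θ (factor D3 o).2.1 D2) _
            (idOpe (factor D3 o).1) Δ' (factor D3 o).2.2)
          (eval t D1 D2' _ (compOpe (factor D3 o).2.1 (idOpe (factor D3 o).1)) Δ'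
            (factor D3 o).2.2) :=
        semEq_unbox (idOpe (factor D3 o).1) (factor D3 o).2.2 hb
      rw [compOpe_id_right] at step1
      have hbself := eval_semEq t h2self
      have h4 := hbself D1 (idOpe D1) Δ D3 Δ' o
      rw [compOpe_id_left] at h4
      exact semEq_trans A' step1 (semEq_symm A' h4)
end
/-! ### Evaluation and substitution -/

/-- Restriction of an environment along an OPE. -/
def restrictCx : {Γ Γ' : Cx} → Ope Γ Γ' → {Θ : Cx} → SemCx Γ' Θ → SemCx Γ Θ
  | _, _, .base, _, _ => PUnit.unit
  | _, _, .drop o, _, δ => restrictCx o δ.1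
  | _, _, .keep o, _, δ => (restrictCx o δ.1, δ.2)
  | _, _, .keepLock o, _, δ => ⟨δ.1, restrictCx o δ.2.1, δ.2.2⟩

theorem restrictCx_id : ∀ {Γ Θ : Cx} (γ : SemCx Γ Θ), restrictCx (idOpe Γ) γ = γ
  | .nil, _, γ => rfl
  | .snoc Γ A, _, γ => by
      simp only [idOpe, restrictCx, restrictCx_id γ.1]
      rfl
  | .lock Γ, _, γ => by
      simp only [idOpe, restrictCx, restrictCx_id γ.2.1]
      rfl

theorem restrictCx_wk : ∀ {Γ Γ' : Cx} (p : Ope Γ Γ') {Θ Θ' : Cx} (o : Ope Θ Θ')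
    (δ : SemCx Γ' Θ), restrictCx p (wkSemCx Γ' o δ) = wkSemCx Γ o (restrictCx p δ)
  | _, _, .base, _, _, o, δ => rfl
  | _, _, .drop p, _, _, o, δ => by
      simp only [restrictCx, wkSemCx]
      exact restrictCx_wk p o δ.1
  | _, _, .keep p, _, _, o, δ => by
      simp only [restrictCx, wkSemCx]
      rw [restrictCx_wk p o δ.1]
  | _, _, .keepLock p, _, _, o, δ => by
      simp only [restrictCx, wkSemCx]
      rw [restrictCx_wk p (factor δ.2.2 o).2.1 δ.2.1]

theorem lookup_restrictCx : ∀ {Γ Γ' : Cx} {A : Ty} (p : Ope Γ Γ') (v : Var Γ A)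
    {Θ : Cx} (δ : SemCx Γ' Θ), lookup (wkVar p v) δ = lookup v (restrictCx p δ)
  | _, _, _, .drop p, v, _, δ => by
      simp only [wkVar, lookup, restrictCx]
      exact lookup_restrictCx p v δ.1
  | _, _, _, .keep p, .zero, _, δ => by simp only [wkVar, lookup, restrictCx]
  | _, _, _, .keep p, .succ v, _, δ => by
      simp only [wkVar, lookup, restrictCx]
      exact lookup_restrictCx p v δ.1

theorem trimSem_restrictCx : ∀ {Δ Γ Γ' : Cx} (e : Ext Δ Γ) (p : Ope Γ Γ')
    {Θ : Cx} (δ : SemCx Γ' Θ),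
    trimSem e (restrictCx p δ) =
      ⟨(trimSem (factor e p).2.2 δ).1,
        restrictCx (factor e p).2.1 (trimSem (factor e p).2.2 δ).2.1,
        (trimSem (factor e p).2.2 δ).2.2⟩
  | _, _, _, e, .drop p, _, δ => by
      rw [factor_drop e p]
      simp only [restrictCx, trimSem]
      rw [trimSem_restrictCx e p δ.1]
  | _, _, _, .var e, .keep p, _, δ => by
      rw [factor_keep e p]
      simp only [restrictCx, trimSem]
      rw [trimSem_restrictCx e p δ.1]
  | _, _, _, .nil, .keepLock p, _, δ => by
      rw [factor_lock p]
      simp only [restrictCx, trimSem]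
      rfl

theorem eval_wkTm : ∀ {Γ Γ' : Cx} {A : Ty} (p : Ope Γ Γ') (t : Tm Γ A) {Θ : Cx}
    (δ : SemCx Γ' Θ), eval (wkTm p t) Θ δ = eval t Θ (restrictCx p δ)
  | _, _, _, p, .var v, _, δ => by
      simp only [wkTm, eval]
      exact lookup_restrictCx p v δ
  | _, _, _, p, .lam t, _, δ => by
      simp only [wkTm, eval]
      funext Γ₁ o a
      refine (eval_wkTm (.keep p) t _).trans ?_
      simp only [restrictCx]
      rw [restrictCx_wk p o δ]
  | _, _, _, p, .app t u, _, δ => by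
      simp only [wkTm, eval]
      rw [eval_wkTm p t, eval_wkTm p u]
  | _, _, _, p, .box t, _, δ => by
      simp only [wkTm, eval]
      funext Γ₁ o Θ₁ e
      refine (eval_wkTm (.keepLock p) t _).trans ?_
      simp only [restrictCx]
      rw [restrictCx_wk p o δ]
  | _, _, _, p, .unbox t e, _, δ => by
      simp only [wkTm, eval]
      rw [eval_wkTm (factor e p).2.1 t, trimSem_restrictCx e p δ]

/-- Evaluation of substitutions. -/
def evalSub : {Γ Δ : Cx} → Sub Γ Δ → {Θ : Cx} → SemCx Γ Θ → SemCx Δ Θ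
  | _, _, .empty, _, _ => PUnit.unit
  | _, _, .snoc s t, _, γ => (evalSub s γ, eval t _ γ)
  | _, _, .lock s e, _, γ =>
      ⟨(trimSem e γ).1, evalSub s (trimSem e γ).2.1, (trimSem e γ).2.2⟩

theorem evalSub_wkSub : ∀ {Γ Γ' Δ : Cx} (p : Ope Γ Γ') (s : Sub Γ Δ) {Θ : Cx}
    (δ : SemCx Γ' Θ), evalSub (wkSub p s) δ = evalSub s (restrictCx p δ)
  | _, _, _, p, .empty, _, δ => rfl
  | _, _, _, p, .snoc s t, _, δ => by
      simp only [wkSub, evalSub]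
      rw [evalSub_wkSub p s δ, eval_wkTm p t δ]
  | _, _, _, p, .lock s e, _, δ => by
      simp only [wkSub, evalSub]
      rw [evalSub_wkSub (factor e p).2.1 s, trimSem_restrictCx e p δ]

theorem evalSub_id : ∀ {Γ Θ : Cx} (γ : SemCx Γ Θ), evalSub (idSub Γ) γ = γ
  | .nil, _, γ => rfl
  | .snoc Γ A, _, γ => by
      simp only [idSub, evalSub, eval, lookup]
      rw [evalSub_wkSub]
      simp only [restrictCx]
      rw [restrictCx_id, evalSub_id γ.1]
      rfl
  | .lock Γ, _, γ => by
      simp only [idSub, evalSub, trimSem]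
      rw [evalSub_id γ.2.1]
      rfl

/-- Transport of lock-environment relatedness along a pointwise map. -/
theorem semEqCx_lock_map {Θ Θ' Δ : Cx} {D D' : SemCx (Cx.lock Θ) Δ}
    (h : SemEqCx (Cx.lock Θ) D D') (F : ∀ {Δ₀ : Cx}, SemCx Θ Δ₀ → SemCx Θ' Δ₀)
    (hF : ∀ {Δ₀ : Cx} {ρ ρ' : SemCx Θ Δ₀}, SemEqCx Θ ρ ρ' → SemEqCx Θ' (F ρ) (F ρ')) :
    SemEqCx (Cx.lock Θ') (⟨D.1, F D.2.1, D.2.2⟩ : SemCx (Cx.lock Θ') Δ)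
      ⟨D'.1, F D'.2.1, D'.2.2⟩ := by
  obtain ⟨D1, D2, D3⟩ := D
  obtain ⟨D1', D2', D3'⟩ := D'
  obtain ⟨h1, h2, h3⟩ := h
  cases h1; cases h3
  exact ⟨rfl, hF h2, rfl⟩

theorem evalSub_semEq : ∀ {Γ Δ : Cx} (s : Sub Γ Δ) {Θ : Cx} {γ γ' : SemCx Γ Θ},
    SemEqCx Γ γ γ' → SemEqCx Δ (evalSub s γ) (evalSub s γ')
  | _, _, .empty, _, _, _, _ => trivial
  | _, _, .snoc s t, _, _, _, h => ⟨evalSub_semEq s h, eval_semEq t h⟩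
  | _, _, .lock s e, _, γ, γ', h =>
      semEqCx_lock_map (trimSem_semEq e h) (evalSub s) (fun h₀ => evalSub_semEq s h₀)

/-- Naturality (up to the PER) of evaluated substitutions. -/
theorem evalSub_wk : ∀ {Γ Δ : Cx} (s : Sub Γ Δ) {Θ Θ' : Cx} (o : Ope Θ Θ')
    {γ γ' : SemCx Γ Θ}, SemEqCx Γ γ γ' →
    SemEqCx Δ (evalSub s (wkSemCx Γ o γ)) (wkSemCx Δ o (evalSub s γ'))
  | _, _, .empty, _, _, o, _, _, _ => trivial
  | _, _, .snoc s t, _, _, o, _, _, h => ⟨evalSub_wk s o h, eval_wk t o h⟩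
  | Γ, _, .lock (Δ := Δ₀) (Θ := Θ₀) s e, Θ₁, Θ₂, o, γ, γ', h => by
      have hrw1 : evalSub (Sub.lock s e) (wkSemCx Γ o γ)
          = ⟨(trimSem e (wkSemCx Γ o γ)).1, evalSub s (trimSem e (wkSemCx Γ o γ)).2.1,
              (trimSem e (wkSemCx Γ o γ)).2.2⟩ := by simp only [evalSub]; rfl
      have hrw2 : evalSub (Sub.lock s e) γ'
          = ⟨(trimSem e γ').1, evalSub s (trimSem e γ').2.1, (trimSem e γ').2.2⟩ := by
        simp only [evalSub]
        rfl
      rw [hrw1, hrw2, trimSem_wk e o γ]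
      have hD := trimSem_semEq e h
      revert hD
      generalize trimSem e γ = D
      generalize trimSem e γ' = D'
      intro hD
      obtain ⟨D1, D2, D3⟩ := D
      obtain ⟨D1', D2', D3'⟩ := D'
      obtain ⟨h1, h2, h3⟩ := hD
      cases h1; cases h3
      exact ⟨rfl, evalSub_wk s (factor D3 o).2.1 h2, rfl⟩
/-! ### The semantic substitution lemma -/

theorem restrictCx_factorOpe : ∀ {Θ Γ : Cx} (e : Ext Θ Γ) {Δ : Cx} (γ : SemCx Γ Δ),
    restrictCx (factorOpe e) γ = trimSem e γ
  | _, _, .nil, _, γ => by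
      simp only [factorOpe, trimSem]
      exact restrictCx_id γ
  | _, _, .var e, _, γ => by
      simp only [factorOpe, restrictCx, trimSem]
      exact restrictCx_factorOpe e γ.1

theorem trimSem_evalSub : ∀ {Γ Δ Θ : Cx} (s : Sub Γ Δ) (e : Ext Θ Δ) {Θ₁ : Cx}
    (γ : SemCx Γ Θ₁),
    trimSem e (evalSub s γ) =
      ⟨(trimSem (trimSub s e).2.2 γ).1,
        evalSub (trimSub s e).2.1 (trimSem (trimSub s e).2.2 γ).2.1,
        (trimSem (trimSub s e).2.2 γ).2.2⟩
  | _, _, _, .lock s₀ e₀, .nil, _, γ => by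
      rw [trimSub_lock]
      simp only [evalSub, trimSem]
      rfl
  | _, _, _, .snoc s₀ u, .var e, _, γ => by
      rw [trimSub_var]
      simp only [evalSub, trimSem]
      exact trimSem_evalSub s₀ e γ

theorem eval_substVar : ∀ {Γ Δ : Cx} {A : Ty} (v : Var Δ A) (s : Sub Γ Δ) {Θ : Cx}
    {γ γ' : SemCx Γ Θ}, SemEqCx Γ γ γ' →
    SemEq A (eval (substVar s v) Θ γ) (lookup v (evalSub s γ'))
  | _, _, _, .zero, .snoc s t, _, _, _, h => eval_semEq t h
  | _, _, _, .succ v, .snoc s t, _, _, _, h => eval_substVar v s h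

theorem eval_subst : ∀ {Γ Δ : Cx} {A : Ty} (t : Tm Δ A) (s : Sub Γ Δ) {Θ : Cx}
    {γ γ' : SemCx Γ Θ}, SemEqCx Γ γ γ' →
    SemEq A (eval (subst s t) Θ γ) (eval t Θ (evalSub s γ'))
  | _, _, _, .var v, s, _, γ, γ', hγ => by
      simp only [subst]
      exact eval_substVar v s hγ
  | _, _, _, .app t u, s, Θ, γ, γ', hγ => by
      simp only [subst]
      exact semEq_app (idOpe Θ) (eval_subst t s hγ) (eval_subst u s hγ)
  | Γ, Δ₀, _, .lam (A := A) (B := B) t, s, Θ, γ, γ', hγ => by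
      simp only [subst]
      intro Γ₁ o Γ₂ o' a a' ha
      have hγ'self := semEqCx_trans Γ (semEqCx_symm Γ hγ) hγ
      have haa := semEq_trans A ha (semEq_symm A ha)
      have ha'a' := semEq_trans A (semEq_symm A ha) ha
      set s' : Sub (Cx.snoc Γ A) (Cx.snoc Δ₀ A) :=
        .snoc (wkSub (.drop (idOpe Γ)) s) (.var .zero) with hs'
      have hmem : SemEqCx (Cx.snoc Γ A) (wkSemCx Γ o γ', a') (wkSemCx Γ o γ, a) :=
        ⟨semEqCx_wk Γ o (semEqCx_symm Γ hγ), semEq_symm A ha⟩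
      have h₁ := semEq_symm B (eval_wk (subst s' t) o' hmem)
      simp only [wkSemCx] at h₁
      rw [wkSemCx_comp Γ o o' γ'] at h₁
      have hE : SemEqCx (Cx.snoc Γ A)
          (wkSemCx Γ (compOpe o o') γ', wkSemTy A o' a')
          (wkSemCx Γ (compOpe o o') γ', wkSemTy A o' a') :=
        ⟨semEqCx_wk Γ _ hγ'self, semEq_wk A o' ha'a'⟩
      have h₂ := eval_subst t s' hE
      have hrw : evalSub s' ((wkSemCx Γ (compOpe o o') γ', wkSemTy A o' a') :
            SemCx (Cx.snoc Γ A) Γ₂)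
          = (evalSub s (wkSemCx Γ (compOpe o o') γ'), wkSemTy A o' a') := by
        simp only [hs', evalSub, eval, lookup]
        erw [evalSub_wkSub]
        simp only [restrictCx]
        rw [restrictCx_id]
      rw [hrw] at h₂
      have h₃ := eval_semEq t
        (⟨evalSub_wk s (compOpe o o') hγ'self, semEq_wk A o' ha'a'⟩ :
          SemEqCx (Cx.snoc Δ₀ A) (evalSub s (wkSemCx Γ (compOpe o o') γ'), wkSemTy A o' a')
            (wkSemCx Δ₀ (compOpe o o') (evalSub s γ'), wkSemTy A o' a'))
      exact semEq_trans B h₁ (semEq_trans B h₂ h₃)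
  | Γ, Δ₀, _, .box (A := A) t, s, Θ, γ, γ', hγ => by
      simp only [subst]
      intro Γ₁ o Δ₁ e Δ' o'
      have hγ'self := semEqCx_trans Γ (semEqCx_symm Γ hγ) hγ
      have hmem : SemEqCx (Cx.lock Γ)
          (⟨Γ₁, wkSemCx Γ o γ', e⟩ : SemCx (Cx.lock Γ) Δ₁) ⟨Γ₁, wkSemCx Γ o γ, e⟩ :=
        ⟨rfl, semEqCx_wk Γ o (semEqCx_symm Γ hγ), rfl⟩
      have h₁ := semEq_symm A (eval_wk (subst (.lock s .nil) t) o' hmem)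
      simp only [wkSemCx] at h₁
      rw [wkSemCx_comp Γ o _ γ'] at h₁
      have hE : SemEqCx (Cx.lock Γ)
          (⟨(factor e o').1, wkSemCx Γ (compOpe o (factor e o').2.1) γ',
            (factor e o').2.2⟩ : SemCx (Cx.lock Γ) Δ')
          ⟨(factor e o').1, wkSemCx Γ (compOpe o (factor e o').2.1) γ', (factor e o').2.2⟩ :=
        ⟨rfl, semEqCx_wk Γ _ hγ'self, rfl⟩
      have h₂ := eval_subst t (.lock s .nil) hE
      have hrw : evalSub (Sub.lock s (.nil (Γ := Γ)))
          (⟨(factor e o').1, wkSemCx Γ (compOpe o (factor e o').2.1) γ',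
            (factor e o').2.2⟩ : SemCx (Cx.lock Γ) Δ')
          = ⟨(factor e o').1, evalSub s (wkSemCx Γ (compOpe o (factor e o').2.1) γ'),
              (factor e o').2.2⟩ := by
        simp only [evalSub, trimSem]
        rfl
      rw [hrw] at h₂
      have h₃ := eval_semEq t
        (⟨rfl, evalSub_wk s (compOpe o (factor e o').2.1) hγ'self, rfl⟩ :
          SemEqCx (Cx.lock Δ₀)
            (⟨(factor e o').1, evalSub s (wkSemCx Γ (compOpe o (factor e o').2.1) γ'),
              (factor e o').2.2⟩ : SemCx (Cx.lock Δ₀) Δ')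
            ⟨(factor e o').1, wkSemCx Δ₀ (compOpe o (factor e o').2.1) (evalSub s γ'),
              (factor e o').2.2⟩)
      exact semEq_trans A h₁ (semEq_trans A h₂ h₃)
  | Γ, Δ₀, _, .unbox (A := A') (Δ := Θ₀) t e, s, Θ, γ, γ', hγ => by
      simp only [subst]
      rw [show eval (Tm.unbox t e) Θ (evalSub s γ')
          = eval t _ (trimSem e (evalSub s γ')).2.1 _ (idOpe (trimSem e (evalSub s γ')).1)
              Θ (trimSem e (evalSub s γ')).2.2 from rfl]
      rw [trimSem_evalSub s e γ']
      rw [show eval (Tm.unbox (subst (trimSub s e).2.1 t) (trimSub s e).2.2) Θ γ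
          = eval (subst (trimSub s e).2.1 t) _ (trimSem (trimSub s e).2.2 γ).2.1 _
              (idOpe (trimSem (trimSub s e).2.2 γ).1) Θ
              (trimSem (trimSub s e).2.2 γ).2.2 from rfl]
      have hD := trimSem_semEq (trimSub s e).2.2 hγ
      revert hD
      generalize trimSem (trimSub s e).2.2 γ = D
      generalize trimSem (trimSub s e).2.2 γ' = D'
      intro hD
      obtain ⟨D1, D2, D3⟩ := D
      obtain ⟨D1', D2', D3'⟩ := D'
      obtain ⟨h1, h2, h3⟩ := hD
      cases h1; cases h3
      exact semEq_unbox _ _ (eval_subst t (trimSub s e).2.1 h2)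

/-! ### The fundamental theorem: soundness of conversion -/

theorem eval_conv {Γ : Cx} {A : Ty} {t u : Tm Γ A} (h : Conv t u) :
    ∀ {Δ : Cx} {γ γ' : SemCx Γ Δ}, SemEqCx Γ γ γ' → SemEq A (eval t Δ γ) (eval u Δ γ') := by
  induction h with
  | refl t => exact fun hγ => eval_semEq t hγ
  | symm _ ih => exact fun hγ => semEq_symm _ (ih (semEqCx_symm _ hγ))
  | trans _ _ ih₁ ih₂ =>
      exact fun hγ => semEq_trans _ (ih₁ (semEqCx_trans _ hγ (semEqCx_symm _ hγ))) (ih₂ hγ)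
  | @congLam Γ A B t t' _ ih =>
      intro Δ γ γ' hγ
      intro Γ₁ o Γ₂ o' a a' ha
      have hγγ := semEqCx_trans Γ hγ (semEqCx_symm Γ hγ)
      have haa := semEq_trans A ha (semEq_symm A ha)
      have h₁ := semEq_symm B (eval_wk t o' (⟨semEqCx_wk Γ o hγγ, haa⟩ :
        SemEqCx (Cx.snoc Γ A) (wkSemCx Γ o γ, a) (wkSemCx Γ o γ, a)))
      simp only [wkSemCx] at h₁
      rw [wkSemCx_comp Γ o o' γ] at h₁
      have h₂ := ih (⟨semEqCx_wk Γ _ hγ, semEq_wk A o' ha⟩ :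
        SemEqCx (Cx.snoc Γ A) (wkSemCx Γ (compOpe o o') γ, wkSemTy A o' a)
          (wkSemCx Γ (compOpe o o') γ', wkSemTy A o' a'))
      exact semEq_trans B h₁ h₂
  | congApp _ _ ih₁ ih₂ =>
      exact fun {Δ} _ _ hγ => semEq_app (idOpe Δ) (ih₁ hγ) (ih₂ hγ)
  | @congBox Γ A t t' _ ih =>
      intro Δ γ γ' hγ
      intro Γ₁ o Δ₁ e Δ' o'
      have hγγ := semEqCx_trans Γ hγ (semEqCx_symm Γ hγ)
      have h₁ := semEq_symm A (eval_wk t o' (⟨rfl, semEqCx_wk Γ o hγγ, rfl⟩ :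
        SemEqCx (Cx.lock Γ) (⟨Γ₁, wkSemCx Γ o γ, e⟩ : SemCx (Cx.lock Γ) Δ₁)
          ⟨Γ₁, wkSemCx Γ o γ, e⟩))
      simp only [wkSemCx] at h₁
      rw [wkSemCx_comp Γ o _ γ] at h₁
      have h₂ := ih (⟨rfl, semEqCx_wk Γ _ hγ, rfl⟩ :
        SemEqCx (Cx.lock Γ)
          (⟨(factor e o').1, wkSemCx Γ (compOpe o (factor e o').2.1) γ,
            (factor e o').2.2⟩ : SemCx (Cx.lock Γ) Δ')
          ⟨(factor e o').1, wkSemCx Γ (compOpe o (factor e o').2.1) γ', (factor e o').2.2⟩)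
      exact semEq_trans A h₁ h₂
  | @congUnbox Δ₀ A Γ₀ t t' e _ ih =>
      exact fun hγ => unbox_eval_semEq (fun h₀ => ih h₀) (trimSem_semEq e hγ)
  | @betaFun Γ A B t u =>
      intro Δ γ γ' hγ
      show SemEq B (eval t Δ (wkSemCx Γ (idOpe Δ) γ, eval u Δ γ)) _
      rw [wkSemCx_id]
      have h := eval_subst t (.snoc (idSub Γ) u) (semEqCx_symm Γ hγ)
      have hrw : evalSub (Sub.snoc (idSub Γ) u) γ = ((γ, eval u Δ γ) : SemCx (Cx.snoc Γ A) Δ) := by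
        simp only [evalSub]
        rw [evalSub_id]
      rw [hrw] at h
      exact semEq_symm B h
  | @etaFun Γ A B t =>
      intro Δ γ γ' hγ
      intro Γ₁ o Γ₂ o' a a' ha
      have hγ'self := semEqCx_trans Γ (semEqCx_symm Γ hγ) hγ
      have ha'a' := semEq_trans A (semEq_symm A ha) ha
      show SemEq B _ (eval (.app (wkTm (.drop (idOpe Γ)) t) (.var .zero)) Γ₂
        (wkSemCx Γ (compOpe o o') γ', wkSemTy A o' a'))
      rw [show eval (Tm.app (wkTm (.drop (idOpe Γ)) t) (.var .zero)) Γ₂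
            (wkSemCx Γ (compOpe o o') γ', wkSemTy A o' a')
          = eval (wkTm (.drop (idOpe Γ)) t) Γ₂
              ((wkSemCx Γ (compOpe o o') γ', wkSemTy A o' a') : SemCx (Cx.snoc Γ A) Γ₂)
              Γ₂ (idOpe Γ₂) (wkSemTy A o' a') from rfl]
      erw [eval_wkTm]
      simp only [restrictCx]
      rw [restrictCx_id]
      have h1 := eval_semEq t hγ Γ₁ o Γ₂ o' a a' ha
      have h2 := semEq_app (idOpe Γ₂) (eval_wk t (compOpe o o') hγ'self)
        (semEq_wk A o' ha'a')
      have h2' : SemEq B (eval t Γ₂ (wkSemCx Γ (compOpe o o') γ') Γ₂ (idOpe Γ₂)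
            (wkSemTy A o' a'))
          (eval t Δ γ' Γ₂ (compOpe (compOpe o o') (idOpe Γ₂)) (wkSemTy A o' a')) := h2
      rw [compOpe_id_right] at h2'
      exact semEq_trans B h1 (semEq_symm B h2')
  | @betaBox Θ₀ A Γ₀ t e =>
      intro Δ γ γ' hγ
      rw [eval_wkTm (factorOpe e) t γ', restrictCx_factorOpe e γ']
      show SemEq A (eval t Δ
        (⟨(trimSem e γ).1, wkSemCx Θ₀ (idOpe (trimSem e γ).1) (trimSem e γ).2.1,
          (trimSem e γ).2.2⟩ : SemCx (Cx.lock Θ₀) Δ)) _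
      rw [wkSemCx_id]
      exact eval_semEq t (trimSem_semEq e hγ)
  | @etaBox Γ A t =>
      intro Δ γ γ' hγ
      intro Γ₁ o Δ₁ e Δ' o'
      have hγ'self := semEqCx_trans Γ (semEqCx_symm Γ hγ) hγ
      have h1 := eval_semEq t hγ Γ₁ o Δ₁ e Δ' o'
      show SemEq A _ (eval t (factor e o').1 (wkSemCx Γ (compOpe o (factor e o').2.1) γ')
        (factor e o').1 (idOpe (factor e o').1) Δ' (factor e o').2.2)
      have h2 := semEq_unbox (idOpe (factor e o').1) (factor e o').2.2
        (eval_wk t (compOpe o (factor e o').2.1) hγ'self)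
      have h2' : SemEq A (eval t (factor e o').1
            (wkSemCx Γ (compOpe o (factor e o').2.1) γ') (factor e o').1
            (idOpe (factor e o').1) Δ' (factor e o').2.2)
          (eval t Δ γ' (factor e o').1
            (compOpe (compOpe o (factor e o').2.1) (idOpe (factor e o').1)) Δ'
            (factor e o').2.2) := h2
      rw [compOpe_id_right] at h2'
      exact semEq_trans A h1 (semEq_symm A h2')
/-! ### Embedding normal forms back into terms -/

mutual
def embNf : {Γ : Cx} → {A : Ty} → Nf Γ A → Tm Γ A
  | _, _, .up n => embNe n
  | _, _, .lam n => .lam (embNf n)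
  | _, _, .box n => .box (embNf n)

def embNe : {Γ : Cx} → {A : Ty} → Ne Γ A → Tm Γ A
  | _, _, .var v => .var v
  | _, _, .app n m => .app (embNe n) (embNf m)
  | _, _, .unbox n e => .unbox (embNe n) e
end

mutual
theorem embNf_wk : ∀ {Γ Γ' : Cx} {A : Ty} (o : Ope Γ Γ') (n : Nf Γ A),
    embNf (wkNf o n) = wkTm o (embNf n)
  | _, _, _, o, .up n => by simp only [wkNf, embNf, wkTm, embNe_wk o n]
  | _, _, _, o, .lam n => by simp only [wkNf, embNf, wkTm, embNf_wk (.keep o) n]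
  | _, _, _, o, .box n => by simp only [wkNf, embNf, wkTm, embNf_wk (.keepLock o) n]

theorem embNe_wk : ∀ {Γ Γ' : Cx} {A : Ty} (o : Ope Γ Γ') (n : Ne Γ A),
    embNe (wkNe o n) = wkTm o (embNe n)
  | _, _, _, o, .var v => by simp only [wkNe, embNe, wkTm]
  | _, _, _, o, .app n m => by
      simp only [wkNe, embNe, wkTm, embNe_wk o n, embNf_wk o m]
  | _, _, _, o, .unbox n e => by
      simp only [wkNe, embNe, wkTm, embNe_wk (factor e o).2.1 n]
end

/-! ### The Kripke logical relation between terms and semantic values -/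

def LogRel : (A : Ty) → {Γ : Cx} → Tm Γ A → SemTy A Γ → Prop
  | .base, _, t, n => Conv t (embNe n)
  | .arr A B, Γ, t, f => ∀ Γ' (o : Ope Γ Γ') (u : Tm Γ' A) (a : SemTy A Γ'),
      LogRel A u a → LogRel B (.app (wkTm o t) u) (f Γ' o a)
  | .box A, Γ, t, b => ∀ Γ' (o : Ope Γ Γ') Δ (e : Ext Γ' Δ),
      LogRel A (.unbox (wkTm o t) e) (b Γ' o Δ e)

theorem logRel_conv : ∀ (A : Ty) {Γ : Cx} {t t' : Tm Γ A} {d : SemTy A Γ},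
    Conv t t' → LogRel A t' d → LogRel A t d
  | .base, _, _, _, _, hc, h => hc.trans h
  | .arr A B, _, _, _, _, hc, h => fun Γ' o u a hu =>
      logRel_conv B (.congApp (wkConv o hc) (.refl u)) (h Γ' o u a hu)
  | .box A, _, _, _, _, hc, h => fun Γ' o Δ e =>
      logRel_conv A (.congUnbox (wkConv o hc)) (h Γ' o Δ e)

theorem logRel_wk : ∀ (A : Ty) {Γ Γ' : Cx} (o : Ope Γ Γ') {t : Tm Γ A} {d : SemTy A Γ},
    LogRel A t d → LogRel A (wkTm o t) (wkSemTy A o d)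
  | .base, _, _, o, t, d, h => by
      have hc := wkConv o h
      rw [← embNe_wk o d] at hc
      exact hc
  | .arr A B, _, _, o, t, f, h => by
      intro Γ' o' u a hu
      have h₁ := h Γ' (compOpe o o') u a hu
      rw [← wkTm_comp o o' t] at h₁
      exact h₁
  | .box A, _, _, o, t, b, h => by
      intro Γ' o' Δ e
      have h₁ := h Γ' (compOpe o o') Δ e
      rw [← wkTm_comp o o' t] at h₁
      exact h₁

mutual
theorem logRel_reify : ∀ (A : Ty) {Γ : Cx} {t : Tm Γ A} {d : SemTy A Γ},
    LogRel A t d → Conv t (embNf (reify A d))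
  | .base, _, t, d, h => by
      simp only [reify, embNf]
      exact h
  | .arr A B, Γ, t, f, h => by
      simp only [reify, embNf]
      refine Conv.trans (Conv.etaFun t) (Conv.congLam ?_)
      refine logRel_reify B (h _ (.drop (idOpe Γ)) (.var .zero) (reflect A (.var .zero)) ?_)
      refine logRel_reflect A ?_
      simp only [embNe]
      exact Conv.refl _
  | .box A, Γ, t, b, h => by
      simp only [reify, embNf]
      refine Conv.trans (Conv.etaBox t) (Conv.congBox ?_)
      refine logRel_reify A ?_
      have h₁ := h Γ (idOpe Γ) (Cx.lock Γ) .nil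
      rwa [wkTm_id] at h₁

theorem logRel_reflect : ∀ (A : Ty) {Γ : Cx} {t : Tm Γ A} {n : Ne Γ A},
    Conv t (embNe n) → LogRel A t (reflect A n)
  | .base, _, t, n, h => h
  | .arr A B, _, t, n, h => by
      intro Γ' o u a hu
      refine logRel_reflect B ?_
      simp only [embNe]
      rw [embNe_wk o n]
      exact Conv.congApp (wkConv o h) (logRel_reify A hu)
  | .box A, _, t, n, h => by
      intro Γ' o Δ e
      refine logRel_reflect A ?_
      simp only [embNe]
      rw [embNe_wk o n]
      exact Conv.congUnbox (wkConv o h)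
end

/-! ### The logical relation on substitutions and the fundamental lemma -/

def LogRelSub : {Γ Δ : Cx} → Sub Γ Δ → SemCx Δ Γ → Prop
  | _, _, .empty, _ => True
  | _, _, .snoc (A := A) s t, ρ => LogRelSub s ρ.1 ∧ LogRel A t ρ.2
  | _, _, .lock (Θ := Θ₀) s e, ρ =>
      ∃ h : ρ.1 = Θ₀, LogRelSub s (h ▸ ρ.2.1) ∧ (h ▸ ρ.2.2) = e

theorem logRelSub_wk : ∀ {Γ Γ' Δ : Cx} (o : Ope Γ Γ') (s : Sub Γ Δ) {ρ : SemCx Δ Γ},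
    LogRelSub s ρ → LogRelSub (wkSub o s) (wkSemCx Δ o ρ)
  | _, _, _, o, .empty, _, _ => trivial
  | _, _, _, o, .snoc s t, ρ, h => ⟨logRelSub_wk o s h.1, logRel_wk _ o h.2⟩
  | _, _, _, o, .lock s e, ρ, h => by
      obtain ⟨ρ₁, ρ₂, ρ₃⟩ := ρ
      obtain ⟨h₁, h₂, h₃⟩ := h
      cases h₁; cases h₃
      exact ⟨rfl, logRelSub_wk (factor ρ₃ o).2.1 s h₂, rfl⟩

theorem logRelSub_trim : ∀ {Γ Δ Θ : Cx} (s : Sub Γ Δ) (e : Ext Θ Δ) {ρ : SemCx Δ Γ},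
    LogRelSub s ρ →
    LogRelSub (Sub.lock (trimSub s e).2.1 (trimSub s e).2.2) (trimSem e ρ)
  | _, _, _, .lock s₀ e₀, .nil, ρ, h => by
      rw [trimSub_lock]
      exact h
  | _, _, _, .snoc s₀ t, .var e, ρ, h => by
      rw [trimSub_var]
      exact logRelSub_trim s₀ e h.1

theorem logRel_substVar : ∀ {Γ Δ : Cx} {A : Ty} (v : Var Δ A) (s : Sub Γ Δ)
    {ρ : SemCx Δ Γ}, LogRelSub s ρ → LogRel A (substVar s v) (lookup v ρ)
  | _, _, _, .zero, .snoc s t, _, h => h.2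
  | _, _, _, .succ v, .snoc s t, _, h => logRel_substVar v s h.1

/-- Destructured unbox case for the fundamental lemma. -/
theorem logRel_unbox_destruct {Θ₀ Θ₁ Γ : Cx} {A' : Ty} {t : Tm Θ₀ (Ty.box A')}
    {S : Sub Θ₁ Θ₀} {E : Ext Θ₁ Γ}
    (ht : ∀ (ρ : SemCx Θ₀ Θ₁), LogRelSub S ρ → LogRel (Ty.box A') (subst S t) (eval t Θ₁ ρ))
    {D : SemCx (Cx.lock Θ₀) Γ} (h : LogRelSub (Sub.lock S E) D) :
    LogRel A' (.unbox (subst S t) E) (eval t D.1 D.2.1 D.1 (idOpe D.1) Γ D.2.2) := by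
  obtain ⟨D1, D2, D3⟩ := D
  obtain ⟨h₁, h₂, h₃⟩ := h
  cases h₁; cases h₃
  have h₄ := ht D2 h₂ D1 (idOpe D1) Γ D3
  rwa [wkTm_id] at h₄

theorem logRel_fundamental : ∀ {Γ Δ : Cx} {A : Ty} (t : Tm Δ A) (s : Sub Γ Δ)
    (ρ : SemCx Δ Γ), LogRelSub s ρ → LogRel A (subst s t) (eval t Γ ρ)
  | _, _, _, .var v, s, ρ, hs => by
      simp only [subst]
      exact logRel_substVar v s hs
  | Γ, _, _, .app t u, s, ρ, hs => by
      simp only [subst]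
      have h := logRel_fundamental t s ρ hs Γ (idOpe Γ) (subst s u) (eval u Γ ρ)
        (logRel_fundamental u s ρ hs)
      rwa [wkTm_id] at h
  | Γ, Δ₀, _, .lam (A := A) (B := B) t, s, ρ, hs => by
      intro Γ' o u a hu
      have hc : Conv (.app (wkTm o (subst s (.lam t))) u) (subst (.snoc (wkSub o s) u) t) := by
        simp only [subst, wkTm]
        have hb := Conv.betaFun (wkTm (.keep o)
          (subst (.snoc (wkSub (.drop (idOpe Γ)) s) (.var .zero)) t)) u
        rwa [subst_beta_comm o s u t] at hb
      exact logRel_conv B hc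
        (logRel_fundamental t (.snoc (wkSub o s) u) (wkSemCx Δ₀ o ρ, a)
          ⟨logRelSub_wk o s hs, hu⟩)
  | Γ, Δ₀, _, .box (A := A) t, s, ρ, hs => by
      intro Γ' o Δ₁ e
      have hc : Conv (.unbox (wkTm o (subst s (.box t))) e)
          (subst (.lock (wkSub o s) e) t) := by
        simp only [subst, wkTm]
        have hb := Conv.betaBox (wkTm (.keepLock o) (subst (.lock s .nil) t)) e
        rw [wkTm_comp (.keepLock o) (factorOpe e) (subst (Sub.lock s .nil) t),
          wkTm_subst (compOpe (.keepLock o) (factorOpe e)) (Sub.lock s .nil) t] at hb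
        simp only [wkSub] at hb
        rw [factor_comp Ext.nil (.keepLock o) (factorOpe e), factor_lock o,
          factor_nil_factorOpe e, compOpe_id_right] at hb
        exact hb
      exact logRel_conv A hc
        (logRel_fundamental t (.lock (wkSub o s) e) ⟨Γ', wkSemCx Δ₀ o ρ, e⟩
          ⟨rfl, logRelSub_wk o s hs, rfl⟩)
  | Γ, Δ₀, _, .unbox (A := A') (Δ := Θ₀) t e, s, ρ, hs => by
      simp only [subst]
      exact logRel_unbox_destruct
        (fun ρ₀ h₀ => logRel_fundamental t (trimSub s e).2.1 ρ₀ h₀)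
        (logRelSub_trim s e hs)

/-! ### The identity environment -/

def reflectCx : (Γ : Cx) → SemCx Γ Γ
  | .nil => PUnit.unit
  | .snoc Γ A => (wkSemCx Γ (.drop (idOpe Γ)) (reflectCx Γ), reflect A (.var .zero))
  | .lock Γ => ⟨Γ, reflectCx Γ, .nil⟩

theorem reflectCx_self : ∀ (Γ : Cx), SemEqCx Γ (reflectCx Γ) (reflectCx Γ)
  | .nil => trivial
  | .snoc Γ A => ⟨semEqCx_wk Γ _ (reflectCx_self Γ), reflect_self A _⟩
  | .lock Γ => ⟨rfl, reflectCx_self Γ, rfl⟩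

theorem logRelSub_id : ∀ (Γ : Cx), LogRelSub (idSub Γ) (reflectCx Γ)
  | .nil => trivial
  | .snoc Γ A => by
      refine ⟨logRelSub_wk (.drop (idOpe Γ)) (idSub Γ) (logRelSub_id Γ), ?_⟩
      refine logRel_reflect A ?_
      simp only [embNe]
      exact Conv.refl _
  | .lock Γ => ⟨rfl, logRelSub_id Γ, rfl⟩

theorem norm_complete {Γ : Cx} {A : Ty} {t u : Tm Γ A} (h : Conv t u) :
    reify A (eval t Γ (reflectCx Γ)) = reify A (eval u Γ (reflectCx Γ)) :=
  reify_eq A (eval_conv h (reflectCx_self Γ))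

theorem norm_adequate {Γ : Cx} {A : Ty} (t : Tm Γ A) :
    Conv t (embNf (reify A (eval t Γ (reflectCx Γ)))) := by
  have ht := logRel_fundamental t (idSub Γ) (reflectCx Γ) (logRelSub_id Γ)
  rw [subst_idSub] at ht
  exact logRel_reify A ht
/-- Normalization for IKC: in the possible-world model over the frame given by
OPEs and the IKC modal accessibility relation, with valuation given by
neutrals of base type, there is a function quote from denotations to normal
forms such that norm = quote ∘ ⟦−⟧ is complete (t ≈ u implies norm t = norm u)
and adequate (norm t = norm u implies t ≈ u). -/
theorem ikc_normalization (Γ : Cx) (A : Ty) :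
    ∃ quote : (∀ Δ, SemCx Γ Δ → SemTy A Δ) → Nf Γ A,
      ∀ t u : Tm Γ A, Conv t u ↔ quote (eval t) = quote (eval u) := by
  refine ⟨fun d => reify A (d Γ (reflectCx Γ)), fun t u => ⟨fun h => norm_complete h, fun h => ?_⟩⟩
  have h₁ := norm_adequate t
  have h₂ := norm_adequate u
  replace h : reify A (eval t Γ (reflectCx Γ)) = reify A (eval u Γ (reflectCx Γ)) := h
  rw [h] at h₁
  exact h₁.trans h₂.symm

end IKC
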